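/- arXiv:2301.05602 — 9 statements merged into one kernel-verified Lean document; each statement's English description precedes it below -/
import Mathlib

section
/- Let d be a positive integer and let α₁, α₂, ν₁, ν₂, ω₁, ω₂, ξ₁, ξ₂ be positive reals. Then the hybrid Cauchy–Matérn function φ̃_CM : [0, ∞) → ℝ defined by φ̃_CM(h) = ω₁ · (1 + h²/α₁)^{−ν₁/2} · γ(ν₁/2, (h² + α₁) ξ₁) / Γ(ν₁/2) + ω₂ ∫_{ξ₂}^∞ exp(−u h²) · (1/Γ(ν₂)) · (1/(2α₂))^{2ν₂} · u^{−ν₂−1} · exp(−1/(4 u α₂²)) du is positive definite on ℝ^d. -/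
open MeasureTheory Real Set

lemma posdef_pow {n d : ℕ} (m : ℕ) (v : Fin n → EuclideanSpace ℝ (Fin d)) (b : Fin n → ℝ) :
    0 ≤ ∑ i : Fin n, ∑ j : Fin n, b i * b j * (inner ℝ (v i) (v j) : ℝ) ^ m := by
  have hinner : ∀ i j : Fin n, (inner ℝ (v i) (v j) : ℝ) = ∑ k : Fin d, v i k * v j k := by
    intro i j
    simp [PiLp.inner_apply, RCLike.inner_apply, conj_trivial, mul_comm]
  have hexp : ∀ i j : Fin n, b i * b j * (inner ℝ (v i) (v j) : ℝ) ^ m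
      = ∑ p : Fin m → Fin d, (b i * ∏ l, v i (p l)) * (b j * ∏ l, v j (p l)) := by
    intro i j
    rw [hinner, Finset.sum_pow' Finset.univ (fun k => v i k * v j k) m]
    rw [Fintype.piFinset_univ, Finset.mul_sum]
    refine Finset.sum_congr rfl fun p _ => ?_
    rw [Finset.prod_mul_distrib]
    ring
  calc (0:ℝ) ≤ ∑ p : Fin m → Fin d, (∑ i : Fin n, b i * ∏ l, v i (p l)) ^ 2 :=
        Finset.sum_nonneg fun p _ => sq_nonneg _
    _ = ∑ i : Fin n, ∑ j : Fin n, b i * b j * (inner ℝ (v i) (v j) : ℝ) ^ m := by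
        simp_rw [hexp, sq, Finset.sum_mul_sum]
        rw [Finset.sum_comm]
        refine Finset.sum_congr rfl fun i _ => Finset.sum_comm

lemma posdef_exp_inner {n d : ℕ} (v : Fin n → EuclideanSpace ℝ (Fin d)) (b : Fin n → ℝ) :
    0 ≤ ∑ i : Fin n, ∑ j : Fin n, b i * b j * Real.exp (inner ℝ (v i) (v j) : ℝ) := by
  have hexp : ∀ x : ℝ, Real.exp x = ∑' m : ℕ, x ^ m / (Nat.factorial m : ℝ) := by
    intro x
    rw [Real.exp_eq_exp_ℝ, NormedSpace.exp_eq_tsum_div]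
  have hsum : ∀ i j : Fin n, Summable (fun m : ℕ => b i * b j * ((inner ℝ (v i) (v j) : ℝ) ^ m / (Nat.factorial m : ℝ))) :=
    fun i j => (Real.summable_pow_div_factorial _).mul_left _
  calc (0:ℝ) ≤ ∑' m : ℕ, ∑ i : Fin n, ∑ j : Fin n, b i * b j * ((inner ℝ (v i) (v j) : ℝ) ^ m / (Nat.factorial m : ℝ)) := by
        refine tsum_nonneg fun m => ?_
        have : ∀ i j : Fin n, b i * b j * ((inner ℝ (v i) (v j) : ℝ) ^ m / (Nat.factorial m : ℝ))
            = (((Nat.factorial m : ℝ):ℝ)⁻¹) * (b i * b j * (inner ℝ (v i) (v j) : ℝ) ^ m) := by intro i j; ring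
        simp_rw [this, ← Finset.mul_sum]
        exact mul_nonneg (by positivity) (posdef_pow m v b)
    _ = ∑ i : Fin n, ∑ j : Fin n, b i * b j * Real.exp (inner ℝ (v i) (v j) : ℝ) := by
        rw [Summable.tsum_finsetSum (fun i _ => ?_)]
        · refine Finset.sum_congr rfl fun i _ => ?_
          rw [Summable.tsum_finsetSum (fun j _ => hsum i j)]
          refine Finset.sum_congr rfl fun j _ => ?_
          rw [hexp, ← tsum_mul_left]
        · exact summable_sum fun j _ => hsum i j

lemma posdef_gauss {n d : ℕ} (s : Fin n → EuclideanSpace ℝ (Fin d)) (a : Fin n → ℝ)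
    {u : ℝ} (hu : 0 ≤ u) :
    0 ≤ ∑ i : Fin n, ∑ j : Fin n, a i * a j * Real.exp (-u * ‖s i - s j‖ ^ 2) := by
  set v : Fin n → EuclideanSpace ℝ (Fin d) := fun i => Real.sqrt (2 * u) • s i with hv
  set b : Fin n → ℝ := fun i => a i * Real.exp (-u * ‖s i‖ ^ 2) with hb
  have key : ∀ i j : Fin n, a i * a j * Real.exp (-u * ‖s i - s j‖ ^ 2)
      = b i * b j * Real.exp (inner ℝ (v i) (v j) : ℝ) := by
    intro i j
    have hvv : (inner ℝ (v i) (v j) : ℝ) = 2 * u * (inner ℝ (s i) (s j) : ℝ) := by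
      rw [hv]
      simp only [real_inner_smul_left, real_inner_smul_right, ← mul_assoc]
      rw [Real.mul_self_sqrt (by positivity)]
    rw [hvv, norm_sub_sq_real, hb]
    have h1 : -u * (‖s i‖ ^ 2 - 2 * (inner ℝ (s i) (s j) : ℝ) + ‖s j‖ ^ 2)
        = (-u * ‖s i‖ ^ 2) + ((-u * ‖s j‖ ^ 2) + 2 * u * (inner ℝ (s i) (s j) : ℝ)) := by ring
    rw [h1, Real.exp_add, Real.exp_add]
    ring
  simp_rw [key]
  exact posdef_exp_inner v b

lemma term1_eq (α ν ξ x : ℝ) (hα : 0 < α) (hξ : 0 < ξ) (hx : 0 ≤ x) :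
    (1 + x / α) ^ (-(ν / 2)) *
      (∫ t in (0:ℝ)..((x + α) * ξ), t ^ (ν / 2 - 1) * Real.exp (-t))
    = α ^ (ν / 2) *
      ∫ u in Ioc (0:ℝ) ξ, Real.exp (-u * x) * (u ^ (ν / 2 - 1) * Real.exp (-α * u)) := by
  set p : ℝ := ν / 2 - 1 with hp
  set c : ℝ := x + α with hc
  have hcpos : 0 < c := by positivity
  have h1 : (c • ∫ u in (0:ℝ)..ξ, (fun t => t ^ p * Real.exp (-t)) (c * u))
      = ∫ t in (0:ℝ)..(c * ξ), t ^ p * Real.exp (-t) := by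
    rw [intervalIntegral.smul_integral_comp_mul_left (fun t => t ^ p * Real.exp (-t)) c,
      mul_zero]
  have h2 : (∫ u in (0:ℝ)..ξ, (fun t => t ^ p * Real.exp (-t)) (c * u))
      = c ^ p * ∫ u in (0:ℝ)..ξ, Real.exp (-u * x) * (u ^ p * Real.exp (-α * u)) := by
    rw [← intervalIntegral.integral_const_mul]
    refine intervalIntegral.integral_congr fun u hu => ?_
    have hu0 : 0 ≤ u := by
      rcases hu with ⟨h, _⟩
      simpa [min_eq_left hξ.le] using h
    simp only []
    rw [Real.mul_rpow hcpos.le hu0]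
    have : -(c * u) = -u * x + -α * u := by rw [hc]; ring
    rw [this, Real.exp_add]
    ring
  have h3 : (1 + x / α) ^ (-(ν / 2)) * (c * c ^ p) = α ^ (ν / 2) := by
    have h4 : (1 : ℝ) + x / α = c / α := by
      rw [hc, add_div, div_self hα.ne', add_comm]
    have h5 : c * c ^ p = c ^ (ν / 2) := by
      nth_rewrite 1 [← Real.rpow_one c]
      rw [← Real.rpow_add hcpos, hp]
      norm_num
    have h6 : (c / α) ^ (-(ν / 2)) = α ^ (ν / 2) / c ^ (ν / 2) := by
      rw [Real.rpow_neg (by positivity), ← Real.inv_rpow (by positivity), inv_div,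
        Real.div_rpow hα.le hcpos.le]
    rw [h4, h5, h6, div_mul_cancel₀ _ (Real.rpow_pos_of_pos hcpos _).ne']
  rw [← h1, smul_eq_mul, h2, intervalIntegral.integral_of_le hξ.le]
  rw [show (1 + x / α) ^ (-(ν / 2)) *
        (c * (c ^ p * ∫ u in Ioc (0:ℝ) ξ, Real.exp (-u * x) * (u ^ p * Real.exp (-α * u))))
      = ((1 + x / α) ^ (-(ν / 2)) * (c * c ^ p)) *
        ∫ u in Ioc (0:ℝ) ξ, Real.exp (-u * x) * (u ^ p * Real.exp (-α * u)) from by ring, h3]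

lemma bound_helperF {X E1 P E2 : ℝ} (hX : 0 ≤ X) (hE1 : E1 ≤ 1) (hE2 : E2 ≤ 1)
    (he1 : 0 ≤ E1) (he2 : 0 ≤ E2) (hP : 0 ≤ P) : X * (E1 * (P * E2)) ≤ X * P := by
  have h : E1 * (P * E2) ≤ P := by
    calc E1 * (P * E2) ≤ 1 * (P * E2) := mul_le_mul_of_nonneg_right hE1 (mul_nonneg hP he2)
      _ = P * E2 := one_mul _
      _ ≤ P * 1 := mul_le_mul_of_nonneg_left hE2 hP
      _ = P := mul_one _
  exact mul_le_mul_of_nonneg_left h hX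

lemma bound_helperG {X E1 C P E3 : ℝ} (hX : 0 ≤ X) (hE1 : E1 ≤ 1) (hE3 : E3 ≤ 1)
    (he1 : 0 ≤ E1) (he3 : 0 ≤ E3) (hC : 0 ≤ C) (hP : 0 ≤ P) :
    X * (E1 * (C * P * E3)) ≤ X * C * P := by
  have h : E1 * (C * P * E3) ≤ C * P := by
    calc E1 * (C * P * E3) ≤ 1 * (C * P * E3) :=
          mul_le_mul_of_nonneg_right hE1 (mul_nonneg (mul_nonneg hC hP) he3)
      _ = (C * P) * E3 := one_mul _
      _ ≤ (C * P) * 1 := mul_le_mul_of_nonneg_left hE3 (mul_nonneg hC hP)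
      _ = C * P := mul_one _
  calc X * (E1 * (C * P * E3)) ≤ X * (C * P) := mul_le_mul_of_nonneg_left h hX
    _ = X * C * P := (mul_assoc _ _ _).symm

/-- The hybrid Cauchy–Matérn covariance function is positive definite on
`ℝ^d` for every positive integer `d`. -/
theorem hybrid_cauchy_matern_posdef
    (d : ℕ) (hd : 0 < d) (α₁ α₂ ν₁ ν₂ ω₁ ω₂ ξ₁ ξ₂ : ℝ)
    (hα₁ : 0 < α₁) (hα₂ : 0 < α₂) (hν₁ : 0 < ν₁) (hν₂ : 0 < ν₂)
    (hω₁ : 0 < ω₁) (hω₂ : 0 < ω₂) (hξ₁ : 0 < ξ₁) (hξ₂ : 0 < ξ₂) :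
    ∀ (n : ℕ) (s : Fin n → EuclideanSpace ℝ (Fin d)) (a : Fin n → ℝ),
      0 ≤ ∑ i : Fin n, ∑ j : Fin n, a i * a j *
        (ω₁ * ((1 + ‖s i - s j‖ ^ 2 / α₁) ^ (-(ν₁ / 2)) *
            (∫ t in (0 : ℝ)..((‖s i - s j‖ ^ 2 + α₁) * ξ₁),
              t ^ (ν₁ / 2 - 1) * Real.exp (-t)) / Real.Gamma (ν₁ / 2)) +
         ω₂ * ∫ u in Ioi ξ₂,
            Real.exp (-u * ‖s i - s j‖ ^ 2) *
              ((1 / Real.Gamma ν₂) * (1 / (2 * α₂)) ^ (2 * ν₂) *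
                u ^ (-ν₂ - 1) * Real.exp (-1 / (4 * u * α₂ ^ 2)))) := by
  intro n s a
  have hΓ₁ : 0 < Real.Gamma (ν₁ / 2) := Real.Gamma_pos_of_pos (by positivity)
  have hΓ₂ : 0 < Real.Gamma ν₂ := Real.Gamma_pos_of_pos hν₂
  set c₁ : ℝ := ω₁ * α₁ ^ (ν₁ / 2) / Real.Gamma (ν₁ / 2) with hc₁
  have hc₁pos : 0 < c₁ := by positivity
  set F : Fin n → Fin n → ℝ → ℝ := fun i j u =>
    (a i * a j * c₁) *
      (Real.exp (-u * ‖s i - s j‖ ^ 2) * (u ^ (ν₁ / 2 - 1) * Real.exp (-α₁ * u))) with hF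
  set G : Fin n → Fin n → ℝ → ℝ := fun i j u =>
    (a i * a j * ω₂) *
      (Real.exp (-u * ‖s i - s j‖ ^ 2) *
        ((1 / Real.Gamma ν₂) * (1 / (2 * α₂)) ^ (2 * ν₂) *
          u ^ (-ν₂ - 1) * Real.exp (-1 / (4 * u * α₂ ^ 2)))) with hG
  -- integrability of F on Ioc 0 ξ₁
  have hiF : ∀ i j : Fin n, IntegrableOn (F i j) (Ioc 0 ξ₁) := by
    intro i j
    have hrpow : IntegrableOn (fun u : ℝ => u ^ (ν₁ / 2 - 1)) (Ioc 0 ξ₁) :=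
      (intervalIntegrable_iff_integrableOn_Ioc_of_le hξ₁.le).mp
        (intervalIntegral.intervalIntegrable_rpow' (by linarith))
    have hint : IntegrableOn (fun u : ℝ => |a i * a j * c₁| * u ^ (ν₁ / 2 - 1)) (Ioc 0 ξ₁) :=
      hrpow.const_mul _
    refine hint.mono' ?_ ?_
    · apply Measurable.aestronglyMeasurable
      rw [hF]; fun_prop
    · rw [ae_restrict_iff' measurableSet_Ioc]
      filter_upwards with u hu
      have hu0 : 0 < u := hu.1
      have h1 : Real.exp (-u * ‖s i - s j‖ ^ 2) ≤ 1 :=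
        Real.exp_le_one_iff.mpr (by nlinarith [sq_nonneg ‖s i - s j‖])
      have h2 : Real.exp (-α₁ * u) ≤ 1 := Real.exp_le_one_iff.mpr (by nlinarith)
      have h3 : (0:ℝ) ≤ u ^ (ν₁ / 2 - 1) := Real.rpow_nonneg hu0.le _
      have e1 := (Real.exp_pos (-u * ‖s i - s j‖ ^ 2)).le
      have e2 := (Real.exp_pos (-α₁ * u)).le
      rw [hF]
      simp only [Real.norm_eq_abs]
      rw [abs_mul, abs_of_nonneg (show (0:ℝ) ≤ Real.exp (-u * ‖s i - s j‖ ^ 2) *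
            (u ^ (ν₁ / 2 - 1) * Real.exp (-α₁ * u)) from by positivity)]
      exact bound_helperF (abs_nonneg _) h1 h2 e1 e2 h3
  -- integrability of G on Ioi ξ₂
  have hiG : ∀ i j : Fin n, IntegrableOn (G i j) (Ioi ξ₂) := by
    intro i j
    have hint : IntegrableOn (fun u : ℝ =>
        (|a i * a j * ω₂| * ((1 / Real.Gamma ν₂) * (1 / (2 * α₂)) ^ (2 * ν₂))) * u ^ (-ν₂ - 1))
        (Ioi ξ₂) :=
      (integrableOn_Ioi_rpow_of_lt (by linarith) hξ₂).const_mul _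
    refine hint.mono' ?_ ?_
    · apply Measurable.aestronglyMeasurable
      rw [hG]; fun_prop
    · rw [ae_restrict_iff' measurableSet_Ioi]
      filter_upwards with u hu
      have hu0 : 0 < u := lt_trans hξ₂ hu
      have h1 : Real.exp (-u * ‖s i - s j‖ ^ 2) ≤ 1 :=
        Real.exp_le_one_iff.mpr (by nlinarith [sq_nonneg ‖s i - s j‖])
      have h2 : Real.exp (-1 / (4 * u * α₂ ^ 2)) ≤ 1 := by
        apply Real.exp_le_one_iff.mpr
        apply div_nonpos_of_nonpos_of_nonneg <;> nlinarith
      have h3 : (0:ℝ) ≤ u ^ (-ν₂ - 1) := Real.rpow_nonneg hu0.le _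
      have h4 : (0:ℝ) ≤ (1 / Real.Gamma ν₂) * (1 / (2 * α₂)) ^ (2 * ν₂) := by positivity
      have e1 := (Real.exp_pos (-u * ‖s i - s j‖ ^ 2)).le
      have e3 := (Real.exp_pos (-1 / (4 * u * α₂ ^ 2))).le
      rw [hG]
      simp only [Real.norm_eq_abs]
      rw [abs_mul, abs_of_nonneg (show (0:ℝ) ≤ Real.exp (-u * ‖s i - s j‖ ^ 2) *
            ((1 / Real.Gamma ν₂) * (1 / (2 * α₂)) ^ (2 * ν₂) *
              u ^ (-ν₂ - 1) * Real.exp (-1 / (4 * u * α₂ ^ 2))) from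
        mul_nonneg e1 (mul_nonneg (mul_nonneg (mul_nonneg (by positivity)
          (Real.rpow_nonneg (by positivity) _)) h3) e3))]
      exact bound_helperG (abs_nonneg _) h1 h2 e1 e3 h4 h3
  -- each summand equals a sum of two set integrals
  have key : ∀ i j : Fin n, a i * a j *
        (ω₁ * ((1 + ‖s i - s j‖ ^ 2 / α₁) ^ (-(ν₁ / 2)) *
            (∫ t in (0 : ℝ)..((‖s i - s j‖ ^ 2 + α₁) * ξ₁),
              t ^ (ν₁ / 2 - 1) * Real.exp (-t)) / Real.Gamma (ν₁ / 2)) +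
         ω₂ * ∫ u in Ioi ξ₂,
            Real.exp (-u * ‖s i - s j‖ ^ 2) *
              ((1 / Real.Gamma ν₂) * (1 / (2 * α₂)) ^ (2 * ν₂) *
                u ^ (-ν₂ - 1) * Real.exp (-1 / (4 * u * α₂ ^ 2))))
      = (∫ u in Ioc (0:ℝ) ξ₁, F i j u) + ∫ u in Ioi ξ₂, G i j u := by
    intro i j
    rw [term1_eq α₁ ν₁ ξ₁ (‖s i - s j‖ ^ 2) hα₁ hξ₁ (by positivity)]
    rw [hF, hG]
    simp only []
    rw [MeasureTheory.integral_const_mul, MeasureTheory.integral_const_mul, hc₁]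
    ring
  -- pointwise nonnegativity of the summed integrands
  have hposF : 0 ≤ ∫ u in Ioc (0:ℝ) ξ₁, ∑ i : Fin n, ∑ j : Fin n, F i j u := by
    refine MeasureTheory.setIntegral_nonneg measurableSet_Ioc fun u hu => ?_
    have hrw : ∀ i j : Fin n, F i j u
        = (c₁ * (u ^ (ν₁ / 2 - 1) * Real.exp (-α₁ * u))) *
          (a i * a j * Real.exp (-u * ‖s i - s j‖ ^ 2)) := by
      intro i j; rw [hF]; ring
    simp_rw [hrw, ← Finset.mul_sum]
    exact mul_nonneg (mul_nonneg hc₁pos.le (mul_nonneg (Real.rpow_nonneg hu.1.le _)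
      (Real.exp_pos _).le)) (posdef_gauss s a hu.1.le)
  have hposG : 0 ≤ ∫ u in Ioi ξ₂, ∑ i : Fin n, ∑ j : Fin n, G i j u := by
    refine MeasureTheory.setIntegral_nonneg measurableSet_Ioi fun u hu => ?_
    have hu0 : 0 < u := lt_trans hξ₂ hu
    have hrw : ∀ i j : Fin n, G i j u
        = (ω₂ * ((1 / Real.Gamma ν₂) * (1 / (2 * α₂)) ^ (2 * ν₂) *
            u ^ (-ν₂ - 1) * Real.exp (-1 / (4 * u * α₂ ^ 2)))) *
          (a i * a j * Real.exp (-u * ‖s i - s j‖ ^ 2)) := by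
      intro i j; rw [hG]; ring
    simp_rw [hrw, ← Finset.mul_sum]
    refine mul_nonneg (mul_nonneg hω₂.le ?_) (posdef_gauss s a hu0.le)
    exact mul_nonneg (mul_nonneg (mul_nonneg (by positivity)
      (Real.rpow_nonneg (by positivity) _)) (Real.rpow_nonneg hu0.le _)) (Real.exp_pos _).le
  -- swap sums and integrals
  have swapF : (∫ u in Ioc (0:ℝ) ξ₁, ∑ i : Fin n, ∑ j : Fin n, F i j u)
      = ∑ i : Fin n, ∑ j : Fin n, ∫ u in Ioc (0:ℝ) ξ₁, F i j u := by
    rw [MeasureTheory.integral_finset_sum _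
      (fun i _ => MeasureTheory.integrable_finset_sum _ fun j _ => hiF i j)]
    exact Finset.sum_congr rfl fun i _ =>
      MeasureTheory.integral_finset_sum _ fun j _ => hiF i j
  have swapG : (∫ u in Ioi ξ₂, ∑ i : Fin n, ∑ j : Fin n, G i j u)
      = ∑ i : Fin n, ∑ j : Fin n, ∫ u in Ioi ξ₂, G i j u := by
    rw [MeasureTheory.integral_finset_sum _
      (fun i _ => MeasureTheory.integrable_finset_sum _ fun j _ => hiG i j)]
    exact Finset.sum_congr rfl fun i _ =>
      MeasureTheory.integral_finset_sum _ fun j _ => hiG i j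
  calc (0:ℝ)
      ≤ (∫ u in Ioc (0:ℝ) ξ₁, ∑ i : Fin n, ∑ j : Fin n, F i j u)
        + ∫ u in Ioi ξ₂, ∑ i : Fin n, ∑ j : Fin n, G i j u := add_nonneg hposF hposG
    _ = (∑ i : Fin n, ∑ j : Fin n, ∫ u in Ioc (0:ℝ) ξ₁, F i j u)
        + ∑ i : Fin n, ∑ j : Fin n, ∫ u in Ioi ξ₂, G i j u := by rw [swapF, swapG]
    _ = ∑ i : Fin n, ∑ j : Fin n,
        ((∫ u in Ioc (0:ℝ) ξ₁, F i j u) + ∫ u in Ioi ξ₂, G i j u) := by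
        rw [← Finset.sum_add_distrib]
        exact Finset.sum_congr rfl fun i _ => (Finset.sum_add_distrib).symm
    _ = _ := Finset.sum_congr rfl fun i _ => Finset.sum_congr rfl fun j _ => (key i j).symm
end

section
/- Let α₁, ν₁, ξ₁, α₂, ν₂, ξ₂, ω₁, ω₂ be positive reals and let κ ≥ 0 be a real number. Then the quantity ω₁ ∫₀^{ξ₁} u^{κ} · (α₁^{ν₁/2}/Γ(ν₁/2)) u^{ν₁/2 − 1} exp(−α₁ u) du + ω₂ ∫_{ξ₂}^∞ u^{κ} · (1/Γ(ν₂)) (1/(2α₂))^{2ν₂} u^{−ν₂−1} exp(−1/(4 u α₂²)) du is finite if and only if κ < ν₂. -/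
open MeasureTheory Real Set

/-- The κ-th moment of the piecewise mixing function of the hybrid
Cauchy–Matérn model is finite if and only if `κ < ν₂`. -/
theorem hybrid_cauchy_matern_moment_finite_iff
    (α₁ ν₁ ξ₁ α₂ ν₂ ξ₂ ω₁ ω₂ κ : ℝ)
    (hα₁ : 0 < α₁) (hν₁ : 0 < ν₁) (hξ₁ : 0 < ξ₁)
    (hα₂ : 0 < α₂) (hν₂ : 0 < ν₂) (hξ₂ : 0 < ξ₂)
    (hω₁ : 0 < ω₁) (hω₂ : 0 < ω₂) (hκ : 0 ≤ κ) :
    (ENNReal.ofReal ω₁ *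
        (∫⁻ u in Ioo (0 : ℝ) ξ₁,
          ENNReal.ofReal (u ^ κ * ((α₁ ^ (ν₁ / 2) / Real.Gamma (ν₁ / 2)) *
            u ^ (ν₁ / 2 - 1) * Real.exp (-α₁ * u)))) +
      ENNReal.ofReal ω₂ *
        (∫⁻ u in Ioi ξ₂,
          ENNReal.ofReal (u ^ κ * ((1 / Real.Gamma ν₂) * (1 / (2 * α₂)) ^ (2 * ν₂) *
            u ^ (-ν₂ - 1) * Real.exp (-1 / (4 * u * α₂ ^ 2))))) < ⊤)
      ↔ κ < ν₂ := by
  set C₁ : ℝ := α₁ ^ (ν₁ / 2) / Real.Gamma (ν₁ / 2) with hC₁def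
  have hΓ₁ : 0 < Real.Gamma (ν₁ / 2) := Real.Gamma_pos_of_pos (by linarith)
  have hC₁ : 0 < C₁ := div_pos (Real.rpow_pos_of_pos hα₁ _) hΓ₁
  set C₂ : ℝ := (1 / Real.Gamma ν₂) * (1 / (2 * α₂)) ^ (2 * ν₂) with hC₂def
  have hΓ₂ : 0 < Real.Gamma ν₂ := Real.Gamma_pos_of_pos hν₂
  have hC₂ : 0 < C₂ := by
    apply mul_pos (by positivity)
    exact Real.rpow_pos_of_pos (by positivity) _
  -- First integral is always finite.
  have h1 : (∫⁻ u in Ioo (0 : ℝ) ξ₁,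
      ENNReal.ofReal (u ^ κ * (C₁ * u ^ (ν₁ / 2 - 1) * Real.exp (-α₁ * u)))) < ⊤ := by
    have hint : IntegrableOn (fun u : ℝ => C₁ * u ^ (κ + ν₁ / 2 - 1)) (Ioo (0:ℝ) ξ₁) := by
      have h0 : IntegrableOn (fun u : ℝ => u ^ (κ + ν₁ / 2 - 1)) (Ioo (0:ℝ) ξ₁) :=
        (intervalIntegral.integrableOn_Ioo_rpow_iff hξ₁).mpr (by linarith)
      exact h0.const_mul _
    refine lt_of_le_of_lt ?_ hint.setLIntegral_lt_top
    apply setLIntegral_mono' measurableSet_Ioo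
    intro u hu
    apply ENNReal.ofReal_le_ofReal
    have hu0 : 0 < u := hu.1
    have hexp : Real.exp (-α₁ * u) ≤ 1 := by
      apply Real.exp_le_one_iff.mpr
      nlinarith
    calc u ^ κ * (C₁ * u ^ (ν₁ / 2 - 1) * Real.exp (-α₁ * u))
        ≤ u ^ κ * (C₁ * u ^ (ν₁ / 2 - 1) * 1) := by
          apply mul_le_mul_of_nonneg_left _ (Real.rpow_nonneg hu0.le _)
          apply mul_le_mul_of_nonneg_left hexp
          positivity
      _ = C₁ * u ^ (κ + ν₁ / 2 - 1) := by
          rw [show κ + ν₁ / 2 - 1 = κ + (ν₁ / 2 - 1) by ring,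
            Real.rpow_add hu0]
          ring
  -- Second integral.
  have key : (∫⁻ u in Ioi ξ₂,
      ENNReal.ofReal (u ^ κ * (C₂ * u ^ (-ν₂ - 1) *
        Real.exp (-1 / (4 * u * α₂ ^ 2))))) < ⊤ ↔ κ < ν₂ := by
    set e : ℝ := Real.exp (-1 / (4 * ξ₂ * α₂ ^ 2)) with hedef
    have he : 0 < e := Real.exp_pos _
    set I : ENNReal := ∫⁻ u in Ioi ξ₂, ENNReal.ofReal (u ^ (κ - ν₂ - 1)) with hIdef
    have hIiff : I < ⊤ ↔ κ < ν₂ := by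
      have hmeas : AEStronglyMeasurable (fun u : ℝ => u ^ (κ - ν₂ - 1))
          ((volume : Measure ℝ).restrict (Ioi ξ₂)) :=
        (Measurable.aestronglyMeasurable (by fun_prop))
      have hpos : 0 ≤ᵐ[(volume : Measure ℝ).restrict (Ioi ξ₂)]
          fun u : ℝ => u ^ (κ - ν₂ - 1) := by
        filter_upwards [ae_restrict_mem measurableSet_Ioi] with u hu
        exact Real.rpow_nonneg (le_of_lt (lt_trans hξ₂ hu)) _
      rw [hIdef, lt_top_iff_ne_top,
        lintegral_ofReal_ne_top_iff_integrable hmeas hpos]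
      have h0 : Integrable (fun u : ℝ => u ^ (κ - ν₂ - 1))
          ((volume : Measure ℝ).restrict (Ioi ξ₂)) ↔ κ - ν₂ - 1 < -1 :=
        integrableOn_Ioi_rpow_iff hξ₂
      rw [h0]
      constructor <;> intro h <;> linarith
    constructor
    · intro h
      rw [← hIiff]
      by_contra hI
      rw [not_lt, top_le_iff] at hI
      have hle : ENNReal.ofReal (C₂ * e) * I ≤ ∫⁻ u in Ioi ξ₂,
          ENNReal.ofReal (u ^ κ * (C₂ * u ^ (-ν₂ - 1) *
            Real.exp (-1 / (4 * u * α₂ ^ 2)))) := by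
        rw [hIdef, ← lintegral_const_mul' _ _ ENNReal.ofReal_ne_top]
        apply setLIntegral_mono' measurableSet_Ioi
        intro u hu
        have hu0 : 0 < u := lt_trans hξ₂ hu
        rw [← ENNReal.ofReal_mul (by positivity)]
        apply ENNReal.ofReal_le_ofReal
        have hexp : e ≤ Real.exp (-1 / (4 * u * α₂ ^ 2)) := by
          apply Real.exp_le_exp.mpr
          rw [div_le_div_iff₀ (by positivity) (by positivity)]
          nlinarith [(show ξ₂ < u from hu).le, sq_nonneg α₂]
        calc C₂ * e * u ^ (κ - ν₂ - 1)
            = e * (u ^ κ * (C₂ * u ^ (-ν₂ - 1))) := by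
              rw [show κ - ν₂ - 1 = κ + (-ν₂ - 1) by ring, Real.rpow_add hu0]
              ring
          _ ≤ Real.exp (-1 / (4 * u * α₂ ^ 2)) * (u ^ κ * (C₂ * u ^ (-ν₂ - 1))) := by
              apply mul_le_mul_of_nonneg_right hexp
              positivity
          _ = u ^ κ * (C₂ * u ^ (-ν₂ - 1) * Real.exp (-1 / (4 * u * α₂ ^ 2))) := by ring
      rw [hI, ENNReal.mul_top (by simp [ENNReal.ofReal_eq_zero, not_le.mpr (mul_pos hC₂ he)]),
        top_le_iff] at hle
      rw [hle] at h
      exact (lt_irrefl _ h)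
    · intro h
      have hIlt : I < ⊤ := hIiff.mpr h
      have hle : (∫⁻ u in Ioi ξ₂,
          ENNReal.ofReal (u ^ κ * (C₂ * u ^ (-ν₂ - 1) *
            Real.exp (-1 / (4 * u * α₂ ^ 2))))) ≤ ENNReal.ofReal C₂ * I := by
        rw [hIdef, ← lintegral_const_mul' _ _ ENNReal.ofReal_ne_top]
        apply setLIntegral_mono' measurableSet_Ioi
        intro u hu
        have hu0 : 0 < u := lt_trans hξ₂ hu
        rw [← ENNReal.ofReal_mul hC₂.le]
        apply ENNReal.ofReal_le_ofReal
        have hexp : Real.exp (-1 / (4 * u * α₂ ^ 2)) ≤ 1 := by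
          apply Real.exp_le_one_iff.mpr
          have h4 : (0:ℝ) ≤ 4 * u * α₂ ^ 2 := by positivity
          exact div_nonpos_of_nonpos_of_nonneg (by norm_num) h4
        calc u ^ κ * (C₂ * u ^ (-ν₂ - 1) * Real.exp (-1 / (4 * u * α₂ ^ 2)))
            ≤ u ^ κ * (C₂ * u ^ (-ν₂ - 1) * 1) := by
              apply mul_le_mul_of_nonneg_left _ (Real.rpow_nonneg hu0.le _)
              apply mul_le_mul_of_nonneg_left hexp
              positivity
          _ = C₂ * u ^ (κ - ν₂ - 1) := by
              rw [show κ - ν₂ - 1 = κ + (-ν₂ - 1) by ring, Real.rpow_add hu0]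
              ring
      exact lt_of_le_of_lt hle (ENNReal.mul_lt_top ENNReal.ofReal_lt_top hIlt)
  constructor
  · intro h
    rw [← key]
    by_contra h2
    rw [not_lt, top_le_iff] at h2
    rw [h2, ENNReal.mul_top (by simp [ENNReal.ofReal_eq_zero, not_le.mpr hω₂])] at h
    simp at h
  · intro h
    apply ENNReal.add_lt_top.mpr
    exact ⟨ENNReal.mul_lt_top ENNReal.ofReal_lt_top h1,
      ENNReal.mul_lt_top ENNReal.ofReal_lt_top (key.mpr h)⟩
end

section
/- Let κ be a natural number and let g : (0, ∞) → [0, ∞) be measurable with ∫₀^∞ g(u) du < ∞ and ∫₀^∞ u^{κ} g(u) du < ∞. Then the function φ : ℝ → ℝ defined by φ(h) = ∫₀^∞ exp(−u h²) g(u) du is 2κ-times continuously differentiable on ℝ. -/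
open MeasureTheory Real Set

private lemma gsm_pow_le_exp (x : ℝ) (hx : 0 ≤ x) (j : ℕ) :
    x ^ j ≤ j.factorial * Real.exp x := by
  have h := Real.sum_le_exp_of_nonneg hx (j+1)
  have h2 : x ^ j / j.factorial ≤ ∑ i ∈ Finset.range (j+1), x ^ i / i.factorial :=
    Finset.single_le_sum (f := fun i => x ^ i / i.factorial)
      (fun i _ => by positivity) (Finset.self_mem_range_succ j)
  have h3 := h2.trans h
  rw [div_le_iff₀ (by positivity)] at h3
  linarith [h3]

private lemma gsm_upow_le (κ p : ℕ) (hp : p ≤ 2*κ) {u : ℝ} (hu : 0 < u) :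
    u ^ p ≤ (1 + u ^ κ) ^ 2 := by
  rcases le_total u 1 with h | h
  · have h1 : u ^ p ≤ 1 := pow_le_one₀ hu.le h
    nlinarith [pow_nonneg hu.le κ]
  · have h1 : u ^ p ≤ u ^ (2*κ) := pow_le_pow_right₀ h hp
    have h2 : u ^ (2*κ) = (u ^ κ) ^ 2 := by rw [← pow_mul]; ring_nf
    nlinarith [pow_nonneg hu.le κ]

/-- The key uniform bound: for `2m ≤ n + 2κ` and `|h| ≤ R`,
`u^m |h|^n e^{-u h²} ≤ √(n!) (max 1 R)^n (1 + u^κ)`. -/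
private lemma gsm_key_bound (κ m n : ℕ) (hmn : 2*m ≤ n + 2*κ) {u R h : ℝ}
    (hu : 0 < u) (hR : |h| ≤ R) :
    u ^ m * |h| ^ n * Real.exp (-u * h ^ 2) ≤
      Real.sqrt n.factorial * (max 1 R) ^ n * (1 + u ^ κ) := by
  set j := min n (2*m) with hjdef
  have hj1 : j ≤ n := min_le_left _ _
  have hj2 : j ≤ 2*m := min_le_right _ _
  have hj3 : 2*m - j ≤ 2*κ := by omega
  set E := Real.exp (-u * h ^ 2) with hE
  have hEpos : 0 < E := Real.exp_pos _
  have hA : 0 ≤ u ^ m * |h| ^ n * E := by positivity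
  have hM1 : (1:ℝ) ≤ max 1 R := le_max_left _ _
  have hM0 : (0:ℝ) ≤ max 1 R := by linarith
  have hRHS : 0 ≤ Real.sqrt n.factorial * (max 1 R) ^ n * (1 + u ^ κ) := by positivity
  rw [← pow_le_pow_iff_left₀ hA hRHS two_ne_zero]
  have e1 : (Real.sqrt n.factorial * (max 1 R) ^ n * (1 + u ^ κ)) ^ 2
      = n.factorial * ((max 1 R) ^ n) ^ 2 * (1 + u ^ κ) ^ 2 := by
    rw [mul_pow, mul_pow, Real.sq_sqrt (by positivity)]
  rw [e1]
  have expand : (u ^ m * |h| ^ n * E) ^ 2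
      = u ^ (2*m - j) * ((u * h ^ 2) ^ j * E) * (|h| ^ (2*(n - j)) * E) := by
    have h1 : (u * h ^ 2) ^ j = u ^ j * (|h| ^ 2) ^ j := by rw [mul_pow, sq_abs]
    have h2 : u ^ (2*m - j) * u ^ j = u ^ (2*m) := pow_sub_mul_pow u hj2
    have h3 : (|h| ^ 2) ^ j * |h| ^ (2*(n - j)) = |h| ^ (2*n) := by
      rw [← pow_mul, ← pow_add]
      congr 1
      omega
    calc (u ^ m * |h| ^ n * E) ^ 2
        = (u ^ (2*m)) * (|h| ^ (2*n)) * (E * E) := by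
          rw [show 2*m = m*2 by ring, show 2*n = n*2 by ring, pow_mul, pow_mul]; ring
      _ = (u ^ (2*m - j) * u ^ j) * ((|h| ^ 2) ^ j * |h| ^ (2*(n - j))) * (E * E) := by
          rw [h2, h3]
      _ = u ^ (2*m - j) * ((u ^ j * (|h| ^ 2) ^ j) * E) * (|h| ^ (2*(n - j)) * E) := by ring
      _ = _ := by rw [← h1]
  rw [expand]
  have b1 : u ^ (2*m - j) ≤ (1 + u ^ κ) ^ 2 := gsm_upow_le κ _ hj3 hu
  have b2 : (u * h ^ 2) ^ j * E ≤ (j.factorial : ℝ) := by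
    have ht : 0 ≤ u * h ^ 2 := by positivity
    have h1 := gsm_pow_le_exp (u * h ^ 2) ht j
    have hEeq : E = Real.exp (-(u * h ^ 2)) := by rw [hE]; ring_nf
    rw [hEeq, Real.exp_neg, mul_inv_le_iff₀ (Real.exp_pos _)]
    linarith [h1]
  have b3 : E ≤ 1 := by
    rw [hE]
    apply Real.exp_le_one_iff.mpr
    nlinarith [sq_nonneg h, hu.le]
  have b4 : |h| ^ (2*(n - j)) * E ≤ ((max 1 R) ^ n) ^ 2 := by
    have c1 : |h| ^ (2*(n - j)) ≤ (max 1 R) ^ (2*(n - j)) :=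
      pow_le_pow_left₀ (abs_nonneg h) (le_trans hR (le_max_right _ _)) _
    have c2 : (max 1 R) ^ (2*(n - j)) ≤ (max 1 R) ^ (2*n) := pow_le_pow_right₀ hM1 (by omega)
    have c3 : ((max 1 R) ^ n) ^ 2 = (max 1 R) ^ (2*n) := by
      rw [← pow_mul]; ring_nf
    rw [c3]
    calc |h| ^ (2*(n - j)) * E ≤ (max 1 R) ^ (2*(n - j)) * 1 := by
          apply mul_le_mul c1 b3 hEpos.le (by positivity)
      _ ≤ (max 1 R) ^ (2*n) := by rw [mul_one]; exact c2
  calc u ^ (2*m - j) * ((u * h ^ 2) ^ j * E) * (|h| ^ (2*(n - j)) * E)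
      ≤ (1 + u ^ κ) ^ 2 * (j.factorial : ℝ) * (((max 1 R) ^ n) ^ 2) := by
        apply mul_le_mul (mul_le_mul b1 b2 (by positivity) (by positivity)) b4
          (by positivity) (by positivity)
    _ = (j.factorial : ℝ) * (((max 1 R) ^ n) ^ 2 * (1 + u ^ κ) ^ 2) := by ring
    _ ≤ (n.factorial : ℝ) * (((max 1 R) ^ n) ^ 2 * (1 + u ^ κ) ^ 2) := by
        apply mul_le_mul_of_nonneg_right (Nat.cast_le.mpr (Nat.factorial_le hj1)) (by positivity)
    _ = _ := by ring

private noncomputable def gsmF (g : ℝ → ℝ) (m n : ℕ) (h : ℝ) : ℝ :=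
  ∫ u in Ioi (0:ℝ), u ^ m * h ^ n * Real.exp (-u * h ^ 2) * g u

private lemma gsm_bound_int (κ : ℕ) (g : ℝ → ℝ)
    (hgi : IntegrableOn g (Ioi 0)) (hgκ : IntegrableOn (fun u => u ^ κ * g u) (Ioi 0)) :
    IntegrableOn (fun u => (1 + u ^ κ) * g u) (Ioi 0) :=
  (hgi.add hgκ).congr (Filter.EventuallyEq.of_eq (funext fun u => by
    simp only [Pi.add_apply]; ring))

private lemma gsm_meas (g : ℝ → ℝ) (hgm : Measurable g) (m n : ℕ) (x : ℝ) :
    AEStronglyMeasurable (fun u : ℝ => u ^ m * x ^ n * Real.exp (-u * x ^ 2) * g u)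
      (volume.restrict (Ioi 0)) := by
  apply Measurable.aestronglyMeasurable
  fun_prop

private lemma gsm_integrable (κ : ℕ) (g : ℝ → ℝ) (hgm : Measurable g)
    (hg0 : ∀ u ∈ Ioi (0 : ℝ), 0 ≤ g u)
    (hgi : IntegrableOn g (Ioi 0)) (hgκ : IntegrableOn (fun u => u ^ κ * g u) (Ioi 0))
    (m n : ℕ) (hmn : 2*m ≤ n + 2*κ) (x : ℝ) :
    IntegrableOn (fun u => u ^ m * x ^ n * Real.exp (-u * x ^ 2) * g u) (Ioi 0) := by
  apply Integrable.mono
    (((gsm_bound_int κ g hgi hgκ).const_mul (Real.sqrt n.factorial * (max 1 |x|) ^ n)))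
    (gsm_meas g hgm m n x)
  rw [ae_restrict_iff' measurableSet_Ioi]
  refine Filter.Eventually.of_forall (fun u hu => ?_)
  have hu' : (0:ℝ) < u := mem_Ioi.mp hu
  have hgu : 0 ≤ g u := hg0 u hu
  have key := gsm_key_bound κ m n hmn (u := u) (R := |x|) (h := x) hu' le_rfl
  calc ‖u ^ m * x ^ n * Real.exp (-u * x ^ 2) * g u‖
      = u ^ m * |x| ^ n * Real.exp (-u * x ^ 2) * g u := by
        rw [Real.norm_eq_abs, abs_mul, abs_mul, abs_mul, abs_pow, abs_pow,
          abs_of_nonneg hu'.le, abs_of_nonneg hgu, abs_of_pos (Real.exp_pos _)]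
    _ ≤ (Real.sqrt n.factorial * (max 1 |x|) ^ n * (1 + u ^ κ)) * g u := by
        exact mul_le_mul_of_nonneg_right key hgu
    _ = Real.sqrt n.factorial * (max 1 |x|) ^ n * ((1 + u ^ κ) * g u) := by ring
    _ ≤ ‖Real.sqrt n.factorial * (max 1 |x|) ^ n * ((1 + u ^ κ) * g u)‖ := le_abs_self _

private lemma gsm_hasDeriv (κ : ℕ) (g : ℝ → ℝ) (hgm : Measurable g)
    (hg0 : ∀ u ∈ Ioi (0 : ℝ), 0 ≤ g u)
    (hgi : IntegrableOn g (Ioi 0)) (hgκ : IntegrableOn (fun u => u ^ κ * g u) (Ioi 0))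
    (m n : ℕ) (hmn : 2*m + 1 ≤ n + 2*κ) (x₀ : ℝ) :
    HasDerivAt (gsmF g m n)
      ((n : ℝ) * gsmF g m (n-1) x₀ - 2 * gsmF g (m+1) (n+1) x₀) x₀ := by
  set R : ℝ := |x₀| + 1 with hRdef
  set C : ℝ := (n : ℝ) * (Real.sqrt (n-1).factorial * (max 1 R) ^ (n-1))
      + 2 * (Real.sqrt (n+1).factorial * (max 1 R) ^ (n+1)) with hCdef
  have main := hasDerivAt_integral_of_dominated_loc_of_deriv_le
    (μ := volume.restrict (Ioi 0)) (x₀ := x₀) (s := Metric.ball x₀ 1)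
    (F := fun x u => u ^ m * x ^ n * Real.exp (-u * x ^ 2) * g u)
    (F' := fun x u => ((n : ℝ) * u ^ m * x ^ (n-1) - 2 * u ^ (m+1) * x ^ (n+1))
        * Real.exp (-u * x ^ 2) * g u)
    (bound := fun u => C * ((1 + u ^ κ) * g u))
    (Metric.ball_mem_nhds x₀ one_pos)
    (Filter.Eventually.of_forall (fun x => gsm_meas g hgm m n x))
    (gsm_integrable κ g hgm hg0 hgi hgκ m n (by omega) x₀)
    (by apply Measurable.aestronglyMeasurable; fun_prop)
    ?_ ((gsm_bound_int κ g hgi hgκ).const_mul C) ?_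
  · obtain ⟨-, hD⟩ := main
    have hrw : (fun u => ((n : ℝ) * u ^ m * x₀ ^ (n-1) - 2 * u ^ (m+1) * x₀ ^ (n+1))
          * Real.exp (-u * x₀ ^ 2) * g u)
        = fun u => (n : ℝ) * (u ^ m * x₀ ^ (n-1) * Real.exp (-u * x₀ ^ 2) * g u)
          - 2 * (u ^ (m+1) * x₀ ^ (n+1) * Real.exp (-u * x₀ ^ 2) * g u) :=
      funext fun u => by ring
    rw [hrw, integral_sub
        ((gsm_integrable κ g hgm hg0 hgi hgκ m (n-1) (by omega) x₀).const_mul _)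
        ((gsm_integrable κ g hgm hg0 hgi hgκ (m+1) (n+1) (by omega) x₀).const_mul _),
      integral_const_mul, integral_const_mul] at hD
    exact hD
  · -- bound
    rw [ae_restrict_iff' measurableSet_Ioi]
    refine Filter.Eventually.of_forall (fun u hu => ?_)
    intro x hx
    have hu' : (0:ℝ) < u := mem_Ioi.mp hu
    have hgu : 0 ≤ g u := hg0 u hu
    have hxR : |x| ≤ R := by
      have := mem_ball_iff_norm.mp hx
      rw [Real.norm_eq_abs] at this
      have h2 := abs_sub_abs_le_abs_sub x x₀
      rw [hRdef]; linarith
    have k1 : u ^ m * |x| ^ (n-1) * Real.exp (-u * x ^ 2)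
        ≤ Real.sqrt (n-1).factorial * (max 1 R) ^ (n-1) * (1 + u ^ κ) :=
      gsm_key_bound κ m (n-1) (by omega) hu' hxR
    have k2 : u ^ (m+1) * |x| ^ (n+1) * Real.exp (-u * x ^ 2)
        ≤ Real.sqrt (n+1).factorial * (max 1 R) ^ (n+1) * (1 + u ^ κ) :=
      gsm_key_bound κ (m+1) (n+1) (by omega) hu' hxR
    have habs : |(n : ℝ) * u ^ m * x ^ (n-1) - 2 * u ^ (m+1) * x ^ (n+1)|
        ≤ (n : ℝ) * (u ^ m * |x| ^ (n-1)) + 2 * (u ^ (m+1) * |x| ^ (n+1)) := by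
      refine (abs_sub _ _).trans (le_of_eq ?_)
      simp only [abs_mul, abs_pow, abs_of_nonneg hu'.le, Nat.abs_cast, abs_two]
      ring
    calc ‖((n : ℝ) * u ^ m * x ^ (n-1) - 2 * u ^ (m+1) * x ^ (n+1))
          * Real.exp (-u * x ^ 2) * g u‖
        = |(n : ℝ) * u ^ m * x ^ (n-1) - 2 * u ^ (m+1) * x ^ (n+1)|
          * Real.exp (-u * x ^ 2) * g u := by
          rw [Real.norm_eq_abs, abs_mul, abs_mul, abs_of_nonneg hgu,
            abs_of_pos (Real.exp_pos _)]
      _ ≤ ((n : ℝ) * (u ^ m * |x| ^ (n-1)) + 2 * (u ^ (m+1) * |x| ^ (n+1)))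
          * Real.exp (-u * x ^ 2) * g u := by
          apply mul_le_mul_of_nonneg_right (mul_le_mul_of_nonneg_right habs
            (Real.exp_pos _).le) hgu
      _ = (n : ℝ) * (u ^ m * |x| ^ (n-1) * Real.exp (-u * x ^ 2)) * g u
          + 2 * (u ^ (m+1) * |x| ^ (n+1) * Real.exp (-u * x ^ 2)) * g u := by ring
      _ ≤ (n : ℝ) * (Real.sqrt (n-1).factorial * (max 1 R) ^ (n-1) * (1 + u ^ κ)) * g u
          + 2 * (Real.sqrt (n+1).factorial * (max 1 R) ^ (n+1) * (1 + u ^ κ)) * g u := by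
          have c1 : (0:ℝ) ≤ (n:ℝ) := n.cast_nonneg
          have := add_le_add
            (mul_le_mul_of_nonneg_right (mul_le_mul_of_nonneg_left k1 c1) hgu)
            (mul_le_mul_of_nonneg_right (mul_le_mul_of_nonneg_left k2 (by norm_num : (0:ℝ) ≤ 2)) hgu)
          exact this
      _ = C * ((1 + u ^ κ) * g u) := by rw [hCdef]; ring
  · -- differentiability
    refine Filter.Eventually.of_forall (fun u => ?_)
    intro x hx
    have h0 : HasDerivAt (fun x : ℝ => -u * x ^ 2) (-u * (2 * x)) x := by
      simpa using (hasDerivAt_pow 2 x).const_mul (-u)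
    have h2 := h0.exp
    have h1 : HasDerivAt (fun x : ℝ => x ^ n) ((n : ℝ) * x ^ (n-1)) x := hasDerivAt_pow n x
    have h4 : HasDerivAt (fun x : ℝ => u ^ m * (x ^ n * Real.exp (-u * x ^ 2)) * g u)
        (u ^ m * ((n : ℝ) * x ^ (n-1) * Real.exp (-u * x ^ 2)
          + x ^ n * (Real.exp (-u * x ^ 2) * (-u * (2 * x)))) * g u) x :=
      ((h1.fun_mul h2).const_mul (u ^ m)).mul_const (g u)
    have hfun : (fun x : ℝ => u ^ m * x ^ n * Real.exp (-u * x ^ 2) * g u)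
        = fun x : ℝ => u ^ m * (x ^ n * Real.exp (-u * x ^ 2)) * g u :=
      funext fun x => by ring
    rw [hfun]
    refine h4.congr_deriv ?_
    ring

private lemma gsm_continuous (κ : ℕ) (g : ℝ → ℝ) (hgm : Measurable g)
    (hg0 : ∀ u ∈ Ioi (0 : ℝ), 0 ≤ g u)
    (hgi : IntegrableOn g (Ioi 0)) (hgκ : IntegrableOn (fun u => u ^ κ * g u) (Ioi 0))
    (m n : ℕ) (hmn : 2*m ≤ n + 2*κ) : Continuous (gsmF g m n) := by
  rw [continuous_iff_continuousAt]
  intro x₀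
  set R : ℝ := |x₀| + 1 with hRdef
  apply continuousAt_of_dominated (bound := fun u =>
      (Real.sqrt n.factorial * (max 1 R) ^ n) * ((1 + u ^ κ) * g u))
  · exact Filter.Eventually.of_forall (fun x => gsm_meas g hgm m n x)
  · filter_upwards [Metric.ball_mem_nhds x₀ one_pos] with x hx
    rw [ae_restrict_iff' measurableSet_Ioi]
    refine Filter.Eventually.of_forall (fun u hu => ?_)
    have hu' : (0:ℝ) < u := mem_Ioi.mp hu
    have hgu : 0 ≤ g u := hg0 u hu
    have hxR : |x| ≤ R := by
      have := mem_ball_iff_norm.mp hx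
      rw [Real.norm_eq_abs] at this
      have h2 := abs_sub_abs_le_abs_sub x x₀
      rw [hRdef]; linarith
    have key := gsm_key_bound κ m n hmn (u := u) hu' hxR
    calc ‖u ^ m * x ^ n * Real.exp (-u * x ^ 2) * g u‖
        = u ^ m * |x| ^ n * Real.exp (-u * x ^ 2) * g u := by
          rw [Real.norm_eq_abs, abs_mul, abs_mul, abs_mul, abs_pow, abs_pow,
            abs_of_nonneg hu'.le, abs_of_nonneg hgu, abs_of_pos (Real.exp_pos _)]
      _ ≤ (Real.sqrt n.factorial * (max 1 R) ^ n * (1 + u ^ κ)) * g u :=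
          mul_le_mul_of_nonneg_right key hgu
      _ = (Real.sqrt n.factorial * (max 1 R) ^ n) * ((1 + u ^ κ) * g u) := by ring
  · exact (gsm_bound_int κ g hgi hgκ).const_mul _
  · refine Filter.Eventually.of_forall (fun u => ?_)
    apply Continuous.continuousAt
    fun_prop

private lemma gsm_main (κ : ℕ) (g : ℝ → ℝ) (hgm : Measurable g)
    (hg0 : ∀ u ∈ Ioi (0 : ℝ), 0 ≤ g u)
    (hgi : IntegrableOn g (Ioi 0)) (hgκ : IntegrableOn (fun u => u ^ κ * g u) (Ioi 0)) :
    ∀ b m n : ℕ, 2*m + b ≤ n + 2*κ → ContDiff ℝ (b : ℕ∞) (gsmF g m n) := by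
  intro b
  induction b with
  | zero =>
    intro m n hmn
    have h := gsm_continuous κ g hgm hg0 hgi hgκ m n (by omega)
    have h0 : (((0:ℕ) : ℕ∞) : WithTop ℕ∞) = 0 := rfl
    rw [h0]
    exact contDiff_zero.mpr h
  | succ b ih =>
    intro m n hmn
    have hd := fun x => gsm_hasDeriv κ g hgm hg0 hgi hgκ m n (by omega) x
    have hdiff : Differentiable ℝ (gsmF g m n) := fun x => (hd x).differentiableAt
    have hders : deriv (gsmF g m n)
        = fun x => (n : ℝ) * gsmF g m (n-1) x - 2 * gsmF g (m+1) (n+1) x :=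
      funext fun x => (hd x).deriv
    have hcast : (((b+1 : ℕ) : ℕ∞) : WithTop ℕ∞) = ((b : ℕ∞) : WithTop ℕ∞) + 1 := by
      push_cast; rfl
    rw [hcast, contDiff_succ_iff_deriv]
    refine ⟨hdiff, ?_, ?_⟩
    · intro hω; simp at hω
    · rw [hders]
      exact (contDiff_const.mul (ih m (n-1) (by omega))).sub
        (contDiff_const.mul (ih (m+1) (n+1) (by omega)))

/-- If the mixing function has a finite κ-th moment, the Gaussian scale
mixture is 2κ-times continuously differentiable. -/
theorem gaussian_scale_mixture_contDiff
    (κ : ℕ) (g : ℝ → ℝ) (hgm : Measurable g)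
    (hg0 : ∀ u ∈ Ioi (0 : ℝ), 0 ≤ g u)
    (hgi : IntegrableOn g (Ioi 0))
    (hgκ : IntegrableOn (fun u => u ^ κ * g u) (Ioi 0)) :
    ContDiff ℝ ((2 * κ : ℕ) : ℕ∞)
      (fun h : ℝ => ∫ u in Ioi (0 : ℝ), Real.exp (-u * h ^ 2) * g u) := by
  have h := gsm_main κ g hgm hg0 hgi hgκ (2*κ) 0 0 (by omega)
  have heq : (fun h : ℝ => ∫ u in Ioi (0:ℝ), Real.exp (-u * h ^ 2) * g u) = gsmF g 0 0 := by
    funext x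
    unfold gsmF
    simp only [pow_zero, one_mul]
  rw [heq]
  exact h
end

section
/- Let α₁, ν₁, ξ₁, α₂, ν₂, ξ₂, ω₁, ω₂ be positive reals, and define φ̃_CM(h) = ω₁ ∫₀^{ξ₁} exp(−u h²) (α₁^{ν₁/2}/Γ(ν₁/2)) u^{ν₁/2 − 1} exp(−α₁ u) du + ω₂ ∫_{ξ₂}^∞ exp(−u h²) (1/Γ(ν₂)) (1/(2α₂))^{2ν₂} u^{−ν₂−1} exp(−1/(4 u α₂²)) du for h ≥ 0. Then lim_{h → ∞} h^{ν₁} φ̃_CM(h) = ω₁ α₁^{ν₁/2}. In particular φ̃_CM(h) has polynomial decay of order h^{−ν₁} at infinity, governed solely by ν₁. -/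
open MeasureTheory Real Set Filter

private lemma int_aux {s b : ℝ} (hs : 0 < s) (hb : 0 < b) :
    IntegrableOn (fun u : ℝ => u ^ (s - 1) * Real.exp (-b * u)) (Ioi 0) := by
  have h := integrableOn_rpow_mul_exp_neg_mul_rpow (p := 1) (s := s - 1) (b := b)
    (by linarith) one_pos hb
  exact h.congr_fun (fun x hx => by simp only [Real.rpow_one]) measurableSet_Ioi

private lemma rpow_sq_aux (ν : ℝ) {h : ℝ} (hh : 0 ≤ h) :
    ((h : ℝ) ^ 2) ^ (ν / 2) = h ^ ν := by
  rw [← Real.rpow_natCast h 2, ← Real.rpow_mul hh]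
  congr 1; ring

private lemma tend_aux {ν c : ℝ} (hc : 0 < c) :
    Tendsto (fun h : ℝ => h ^ ν * Real.exp (-c * h ^ 2)) atTop (nhds 0) := by
  have base := tendsto_rpow_mul_exp_neg_mul_atTop_nhds_zero (ν / 2) c hc
  have comp := base.comp
    (tendsto_pow_atTop (two_ne_zero) : Tendsto (fun h : ℝ => h ^ 2) atTop atTop)
  refine comp.congr' ?_
  filter_upwards [eventually_ge_atTop (0 : ℝ)] with h hh
  simp only [Function.comp_apply, rpow_sq_aux ν hh]

/-- Polynomial tail behaviour of the hybrid Cauchy–Matérn covariance: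
`h ^ ν₁ * φ̃_CM h → ω₁ * α₁ ^ (ν₁ / 2)` as `h → ∞`. -/
theorem hybrid_cauchy_matern_tail
    (α₁ ν₁ ξ₁ α₂ ν₂ ξ₂ ω₁ ω₂ : ℝ)
    (hα₁ : 0 < α₁) (hν₁ : 0 < ν₁) (hξ₁ : 0 < ξ₁)
    (hα₂ : 0 < α₂) (hν₂ : 0 < ν₂) (hξ₂ : 0 < ξ₂)
    (hω₁ : 0 < ω₁) (hω₂ : 0 < ω₂) :
    Tendsto
      (fun h : ℝ => h ^ ν₁ *
        (ω₁ * (∫ u in (0 : ℝ)..ξ₁,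
            Real.exp (-u * h ^ 2) * ((α₁ ^ (ν₁ / 2) / Real.Gamma (ν₁ / 2)) *
              u ^ (ν₁ / 2 - 1) * Real.exp (-α₁ * u))) +
         ω₂ * ∫ u in Ioi ξ₂,
            Real.exp (-u * h ^ 2) * ((1 / Real.Gamma ν₂) * (1 / (2 * α₂)) ^ (2 * ν₂) *
              u ^ (-ν₂ - 1) * Real.exp (-1 / (4 * u * α₂ ^ 2)))))
      atTop (nhds (ω₁ * α₁ ^ (ν₁ / 2))) := by
  have hs : 0 < ν₁ / 2 := by linarith
  have hΓ : 0 < Real.Gamma (ν₁ / 2) := Real.Gamma_pos_of_pos hs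
  -- integrability of F h on Ioi 0
  have hFint : ∀ h : ℝ, IntegrableOn
      (fun u : ℝ => u ^ (ν₁ / 2 - 1) * Real.exp (-((h ^ 2 + α₁) * u))) (Ioi 0) := by
    intro h
    have := int_aux hs (show (0:ℝ) < h ^ 2 + α₁ by positivity)
    exact this.congr_fun (fun x _ => by simp only [neg_mul]) measurableSet_Ioi
  -- Gamma-integral evaluation
  have hGamma : ∀ h : ℝ, (∫ u in Ioi (0:ℝ),
      u ^ (ν₁ / 2 - 1) * Real.exp (-((h ^ 2 + α₁) * u)))
      = (1 / (h ^ 2 + α₁)) ^ (ν₁ / 2) * Real.Gamma (ν₁ / 2) := fun h =>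
    Real.integral_rpow_mul_exp_neg_mul_Ioi hs (by positivity)
  -- splitting the integral
  have hsplit : ∀ h : ℝ, (∫ u in Ioi (0:ℝ),
        u ^ (ν₁ / 2 - 1) * Real.exp (-((h ^ 2 + α₁) * u)))
      = (∫ u in Ioc (0:ℝ) ξ₁, u ^ (ν₁ / 2 - 1) * Real.exp (-((h ^ 2 + α₁) * u)))
        + ∫ u in Ioi ξ₁, u ^ (ν₁ / 2 - 1) * Real.exp (-((h ^ 2 + α₁) * u)) := by
    intro h
    rw [← setIntegral_union (Ioc_disjoint_Ioi le_rfl) measurableSet_Ioi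
        ((hFint h).mono_set Ioc_subset_Ioi_self)
        ((hFint h).mono_set (Ioi_subset_Ioi hξ₁.le)),
      Ioc_union_Ioi_eq_Ioi hξ₁.le]
  -- evaluation of the first (interval) integral
  have hI₁ : ∀ h : ℝ, (∫ u in (0 : ℝ)..ξ₁,
        Real.exp (-u * h ^ 2) * ((α₁ ^ (ν₁ / 2) / Real.Gamma (ν₁ / 2)) *
          u ^ (ν₁ / 2 - 1) * Real.exp (-α₁ * u)))
      = (α₁ ^ (ν₁ / 2) / Real.Gamma (ν₁ / 2)) *
        ((1 / (h ^ 2 + α₁)) ^ (ν₁ / 2) * Real.Gamma (ν₁ / 2)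
          - ∫ u in Ioi ξ₁, u ^ (ν₁ / 2 - 1) * Real.exp (-((h ^ 2 + α₁) * u))) := by
    intro h
    rw [intervalIntegral.integral_of_le hξ₁.le]
    have heq : ∀ u ∈ Ioc (0:ℝ) ξ₁,
        Real.exp (-u * h ^ 2) * ((α₁ ^ (ν₁ / 2) / Real.Gamma (ν₁ / 2)) *
          u ^ (ν₁ / 2 - 1) * Real.exp (-α₁ * u))
        = (α₁ ^ (ν₁ / 2) / Real.Gamma (ν₁ / 2)) *
            (u ^ (ν₁ / 2 - 1) * Real.exp (-((h ^ 2 + α₁) * u))) := by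
      intro u _
      rw [show -((h ^ 2 + α₁) * u) = -u * h ^ 2 + -α₁ * u by ring, Real.exp_add]
      ring
    rw [setIntegral_congr_fun measurableSet_Ioc heq, MeasureTheory.integral_const_mul _ _, ← hGamma h,
      hsplit h]
    ring
  -- the tail term tends to zero
  have tendT : Tendsto (fun h : ℝ => h ^ ν₁ *
      ∫ u in Ioi ξ₁, u ^ (ν₁ / 2 - 1) * Real.exp (-((h ^ 2 + α₁) * u)))
      atTop (nhds 0) := by
    set C : ℝ := ∫ u in Ioi ξ₁, u ^ (ν₁ / 2 - 1) * Real.exp (-α₁ * u) with hC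
    have hCnn : 0 ≤ C := setIntegral_nonneg measurableSet_Ioi (fun u hu => by
      have h0u : (0:ℝ) < u := lt_trans hξ₁ hu
      positivity)
    have hTnn : ∀ h : ℝ, 0 ≤ ∫ u in Ioi ξ₁,
        u ^ (ν₁ / 2 - 1) * Real.exp (-((h ^ 2 + α₁) * u)) := fun h =>
      setIntegral_nonneg measurableSet_Ioi (fun u hu => by
        have h0u : (0:ℝ) < u := lt_trans hξ₁ hu
        positivity)
    have hTle : ∀ h : ℝ, (∫ u in Ioi ξ₁,
        u ^ (ν₁ / 2 - 1) * Real.exp (-((h ^ 2 + α₁) * u)))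
        ≤ Real.exp (-ξ₁ * h ^ 2) * C := by
      intro h
      have hint1 : IntegrableOn
          (fun u : ℝ => u ^ (ν₁ / 2 - 1) * Real.exp (-((h ^ 2 + α₁) * u))) (Ioi ξ₁) :=
        (hFint h).mono_set (Ioi_subset_Ioi hξ₁.le)
      have hint2 : IntegrableOn
          (fun u : ℝ => Real.exp (-ξ₁ * h ^ 2) *
            (u ^ (ν₁ / 2 - 1) * Real.exp (-α₁ * u))) (Ioi ξ₁) :=
        ((int_aux hs hα₁).mono_set (Ioi_subset_Ioi hξ₁.le)).const_mul _
      calc (∫ u in Ioi ξ₁, u ^ (ν₁ / 2 - 1) * Real.exp (-((h ^ 2 + α₁) * u)))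
          ≤ ∫ u in Ioi ξ₁, Real.exp (-ξ₁ * h ^ 2) *
              (u ^ (ν₁ / 2 - 1) * Real.exp (-α₁ * u)) := by
            refine setIntegral_mono_on hint1 hint2 measurableSet_Ioi (fun u hu => ?_)
            have h0u : (0:ℝ) < u := lt_trans hξ₁ hu
            have key : Real.exp (-(h ^ 2) * u) ≤ Real.exp (-ξ₁ * h ^ 2) := by
              apply Real.exp_le_exp.2
              nlinarith [sq_nonneg h, (mem_Ioi.1 hu)]
            calc u ^ (ν₁ / 2 - 1) * Real.exp (-((h ^ 2 + α₁) * u))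
                = Real.exp (-(h ^ 2) * u) * (u ^ (ν₁ / 2 - 1) * Real.exp (-α₁ * u)) := by
                  rw [show -((h ^ 2 + α₁) * u) = -(h ^ 2) * u + -α₁ * u by ring,
                    Real.exp_add]
                  ring
              _ ≤ Real.exp (-ξ₁ * h ^ 2) * (u ^ (ν₁ / 2 - 1) * Real.exp (-α₁ * u)) :=
                  mul_le_mul_of_nonneg_right key (by positivity)
        _ = Real.exp (-ξ₁ * h ^ 2) * C := by rw [MeasureTheory.integral_const_mul _ _]
    have hbound : Tendsto (fun h : ℝ => (h ^ ν₁ * Real.exp (-ξ₁ * h ^ 2)) * C)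
        atTop (nhds 0) := by simpa using (tend_aux hξ₁).mul_const C
    refine squeeze_zero' ?_ ?_ hbound
    · filter_upwards [eventually_ge_atTop (0:ℝ)] with h hh
      exact mul_nonneg (Real.rpow_nonneg hh _) (hTnn h)
    · filter_upwards [eventually_ge_atTop (0:ℝ)] with h hh
      calc h ^ ν₁ * ∫ u in Ioi ξ₁, u ^ (ν₁ / 2 - 1) * Real.exp (-((h ^ 2 + α₁) * u))
          ≤ h ^ ν₁ * (Real.exp (-ξ₁ * h ^ 2) * C) :=
            mul_le_mul_of_nonneg_left (hTle h) (Real.rpow_nonneg hh _)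
        _ = (h ^ ν₁ * Real.exp (-ξ₁ * h ^ 2)) * C := by ring
  -- the second (Matérn-tail) integral times h^ν₁ tends to zero
  have tendI₂ : Tendsto (fun h : ℝ => h ^ ν₁ *
      ∫ u in Ioi ξ₂, Real.exp (-u * h ^ 2) * ((1 / Real.Gamma ν₂) *
        (1 / (2 * α₂)) ^ (2 * ν₂) * u ^ (-ν₂ - 1) *
        Real.exp (-1 / (4 * u * α₂ ^ 2)))) atTop (nhds 0) := by
    have hBint : IntegrableOn (fun u : ℝ => (1 / Real.Gamma ν₂) *
        (1 / (2 * α₂)) ^ (2 * ν₂) * u ^ (-ν₂ - 1)) (Ioi ξ₂) :=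
      (integrableOn_Ioi_rpow_of_lt (by linarith) hξ₂).const_mul _
    set C₂ : ℝ := ∫ u in Ioi ξ₂, (1 / Real.Gamma ν₂) *
        (1 / (2 * α₂)) ^ (2 * ν₂) * u ^ (-ν₂ - 1) with hC₂
    have hΓ₂ : 0 < Real.Gamma ν₂ := Real.Gamma_pos_of_pos hν₂
    have hC₂nn : 0 ≤ C₂ := setIntegral_nonneg measurableSet_Ioi (fun u hu => by
      have h0u : (0:ℝ) < u := lt_trans hξ₂ hu
      positivity)
    have hImeas : ∀ h : ℝ, AEStronglyMeasurable (fun u : ℝ =>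
        Real.exp (-u * h ^ 2) * ((1 / Real.Gamma ν₂) * (1 / (2 * α₂)) ^ (2 * ν₂) *
          u ^ (-ν₂ - 1) * Real.exp (-1 / (4 * u * α₂ ^ 2))))
        (volume.restrict (Ioi ξ₂)) := by
      intro h
      apply Measurable.aestronglyMeasurable
      fun_prop
    have hIint : ∀ h : ℝ, IntegrableOn (fun u : ℝ =>
        Real.exp (-u * h ^ 2) * ((1 / Real.Gamma ν₂) * (1 / (2 * α₂)) ^ (2 * ν₂) *
          u ^ (-ν₂ - 1) * Real.exp (-1 / (4 * u * α₂ ^ 2)))) (Ioi ξ₂) := by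
      intro h
      refine hBint.mono' (hImeas h) ?_
      refine (ae_restrict_iff' measurableSet_Ioi).2 (Eventually.of_forall fun u hu => ?_)
      have h0u : (0:ℝ) < u := lt_trans hξ₂ hu
      have e1 : Real.exp (-u * h ^ 2) ≤ 1 := Real.exp_le_one_iff.2 (by nlinarith [sq_nonneg h])
      have e2 : Real.exp (-1 / (4 * u * α₂ ^ 2)) ≤ 1 := Real.exp_le_one_iff.2
        (div_nonpos_iff.2 (Or.inr ⟨by norm_num, by positivity⟩))
      rw [Real.norm_eq_abs, abs_of_nonneg (by positivity)]
      nlinarith [Real.exp_nonneg (-u * h ^ 2), Real.exp_nonneg (-1 / (4 * u * α₂ ^ 2)),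
        mul_nonneg (mul_nonneg (by positivity : (0:ℝ) ≤ 1 / Real.Gamma ν₂ * (1 / (2 * α₂)) ^ (2 * ν₂)) (Real.rpow_nonneg h0u.le (-ν₂ - 1))) (Real.exp_nonneg (-1 / (4 * u * α₂ ^ 2))),
        mul_nonneg (by positivity : (0:ℝ) ≤ 1 / Real.Gamma ν₂ * (1 / (2 * α₂)) ^ (2 * ν₂)) (Real.rpow_nonneg h0u.le (-ν₂ - 1))]
    have hInn : ∀ h : ℝ, 0 ≤ ∫ u in Ioi ξ₂,
        Real.exp (-u * h ^ 2) * ((1 / Real.Gamma ν₂) * (1 / (2 * α₂)) ^ (2 * ν₂) *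
          u ^ (-ν₂ - 1) * Real.exp (-1 / (4 * u * α₂ ^ 2))) := fun h =>
      setIntegral_nonneg measurableSet_Ioi (fun u hu => by
        have h0u : (0:ℝ) < u := lt_trans hξ₂ hu
        positivity)
    have hIle : ∀ h : ℝ, (∫ u in Ioi ξ₂,
        Real.exp (-u * h ^ 2) * ((1 / Real.Gamma ν₂) * (1 / (2 * α₂)) ^ (2 * ν₂) *
          u ^ (-ν₂ - 1) * Real.exp (-1 / (4 * u * α₂ ^ 2))))
        ≤ Real.exp (-ξ₂ * h ^ 2) * C₂ := by
      intro h
      calc (∫ u in Ioi ξ₂,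
          Real.exp (-u * h ^ 2) * ((1 / Real.Gamma ν₂) * (1 / (2 * α₂)) ^ (2 * ν₂) *
            u ^ (-ν₂ - 1) * Real.exp (-1 / (4 * u * α₂ ^ 2))))
          ≤ ∫ u in Ioi ξ₂, Real.exp (-ξ₂ * h ^ 2) * ((1 / Real.Gamma ν₂) *
              (1 / (2 * α₂)) ^ (2 * ν₂) * u ^ (-ν₂ - 1)) := by
            refine setIntegral_mono_on (hIint h) (hBint.const_mul _) measurableSet_Ioi
              (fun u hu => ?_)
            have h0u : (0:ℝ) < u := lt_trans hξ₂ hu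
            have e1 : Real.exp (-u * h ^ 2) ≤ Real.exp (-ξ₂ * h ^ 2) :=
              Real.exp_le_exp.2 (by nlinarith [sq_nonneg h, mem_Ioi.1 hu])
            have e2 : Real.exp (-1 / (4 * u * α₂ ^ 2)) ≤ 1 := Real.exp_le_one_iff.2
              (div_nonpos_iff.2 (Or.inr ⟨by norm_num, by positivity⟩))
            have hB0 : (0:ℝ) ≤ (1 / Real.Gamma ν₂) * (1 / (2 * α₂)) ^ (2 * ν₂) *
                u ^ (-ν₂ - 1) := by positivity
            calc Real.exp (-u * h ^ 2) * ((1 / Real.Gamma ν₂) *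
                (1 / (2 * α₂)) ^ (2 * ν₂) * u ^ (-ν₂ - 1) *
                Real.exp (-1 / (4 * u * α₂ ^ 2)))
                ≤ Real.exp (-ξ₂ * h ^ 2) * ((1 / Real.Gamma ν₂) *
                    (1 / (2 * α₂)) ^ (2 * ν₂) * u ^ (-ν₂ - 1) *
                    Real.exp (-1 / (4 * u * α₂ ^ 2))) :=
                  mul_le_mul_of_nonneg_right e1 (by positivity)
              _ ≤ Real.exp (-ξ₂ * h ^ 2) * ((1 / Real.Gamma ν₂) *
                    (1 / (2 * α₂)) ^ (2 * ν₂) * u ^ (-ν₂ - 1) * 1) := by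
                  refine mul_le_mul_of_nonneg_left ?_ (Real.exp_nonneg _)
                  exact mul_le_mul_of_nonneg_left e2 hB0
              _ = Real.exp (-ξ₂ * h ^ 2) * ((1 / Real.Gamma ν₂) *
                    (1 / (2 * α₂)) ^ (2 * ν₂) * u ^ (-ν₂ - 1)) := by ring
        _ = Real.exp (-ξ₂ * h ^ 2) * C₂ := by rw [MeasureTheory.integral_const_mul _ _]
    have hbound : Tendsto (fun h : ℝ => (h ^ ν₁ * Real.exp (-ξ₂ * h ^ 2)) * C₂)
        atTop (nhds 0) := by simpa using (tend_aux hξ₂).mul_const C₂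
    refine squeeze_zero' ?_ ?_ hbound
    · filter_upwards [eventually_ge_atTop (0:ℝ)] with h hh
      exact mul_nonneg (Real.rpow_nonneg hh _) (hInn h)
    · filter_upwards [eventually_ge_atTop (0:ℝ)] with h hh
      calc h ^ ν₁ * ∫ u in Ioi ξ₂,
          Real.exp (-u * h ^ 2) * ((1 / Real.Gamma ν₂) * (1 / (2 * α₂)) ^ (2 * ν₂) *
            u ^ (-ν₂ - 1) * Real.exp (-1 / (4 * u * α₂ ^ 2)))
          ≤ h ^ ν₁ * (Real.exp (-ξ₂ * h ^ 2) * C₂) :=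
            mul_le_mul_of_nonneg_left (hIle h) (Real.rpow_nonneg hh _)
        _ = (h ^ ν₁ * Real.exp (-ξ₂ * h ^ 2)) * C₂ := by ring
  -- the main term
  have tendA : Tendsto (fun h : ℝ => h ^ ν₁ *
      ((1 / (h ^ 2 + α₁)) ^ (ν₁ / 2) * Real.Gamma (ν₁ / 2)))
      atTop (nhds (Real.Gamma (ν₁ / 2))) := by
    have ht : Tendsto (fun h : ℝ => h ^ 2 + α₁) atTop atTop :=
      tendsto_atTop_add_const_right _ _ (tendsto_pow_atTop two_ne_zero)
    have h0 : Tendsto (fun h : ℝ => α₁ / (h ^ 2 + α₁)) atTop (nhds 0) :=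
      tendsto_const_nhds.div_atTop ht
    have hbase : Tendsto (fun h : ℝ => h ^ 2 / (h ^ 2 + α₁)) atTop (nhds 1) := by
      have h1 : Tendsto (fun h : ℝ => 1 - α₁ / (h ^ 2 + α₁)) atTop (nhds 1) := by
        simpa using (tendsto_const_nhds (x := (1:ℝ)) (f := atTop)).sub h0
      refine h1.congr (fun h => ?_)
      have hne : h ^ 2 + α₁ ≠ 0 := by positivity
      field_simp
      ring
    have hr : Tendsto (fun h : ℝ => (h ^ 2 / (h ^ 2 + α₁)) ^ (ν₁ / 2))
        atTop (nhds 1) := by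
      have := hbase.rpow_const (p := ν₁ / 2) (Or.inl one_ne_zero)
      simpa using this
    have hmul : Tendsto (fun h : ℝ => (h ^ 2 / (h ^ 2 + α₁)) ^ (ν₁ / 2) *
        Real.Gamma (ν₁ / 2)) atTop (nhds (Real.Gamma (ν₁ / 2))) := by
      simpa using hr.mul_const (Real.Gamma (ν₁ / 2))
    refine hmul.congr' ?_
    filter_upwards [eventually_ge_atTop (0:ℝ)] with h hh
    have h1 : (h ^ 2 / (h ^ 2 + α₁)) = h ^ 2 * (1 / (h ^ 2 + α₁)) := by ring
    rw [h1, Real.mul_rpow (by positivity) (by positivity), rpow_sq_aux ν₁ hh]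
    ring
  -- assemble
  have hc₁ : α₁ ^ (ν₁ / 2) / Real.Gamma (ν₁ / 2) * Real.Gamma (ν₁ / 2)
      = α₁ ^ (ν₁ / 2) := by field_simp
  have final := (((tendA.const_mul (ω₁ * (α₁ ^ (ν₁ / 2) / Real.Gamma (ν₁ / 2)))).sub
      (tendT.const_mul (ω₁ * (α₁ ^ (ν₁ / 2) / Real.Gamma (ν₁ / 2))))).add
      (tendI₂.const_mul ω₂))
  have hval : ω₁ * (α₁ ^ (ν₁ / 2) / Real.Gamma (ν₁ / 2)) * Real.Gamma (ν₁ / 2)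
      - ω₁ * (α₁ ^ (ν₁ / 2) / Real.Gamma (ν₁ / 2)) * 0 + ω₂ * 0
      = ω₁ * α₁ ^ (ν₁ / 2) := by
    rw [mul_zero, mul_zero, sub_zero, add_zero, mul_assoc, hc₁]
  rw [← hval]
  refine final.congr (fun h => ?_)
  rw [hI₁ h]
  ring
end

section
/- Let α, ν, ξ > 0. Then lim_{h → ∞} h^{ν} ∫₀^{ξ} exp(−u h²) · (α^{ν/2}/Γ(ν/2)) · u^{ν/2 − 1} · exp(−α u) du = α^{ν/2}. -/
open MeasureTheory Real Set Filter
open Topology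

/-- Polynomial tail behaviour of the truncated gamma mixture (the Cauchy
piece): `h ^ ν * ∫₀^ξ exp(-u h²) g_C(u; α, ν) du → α ^ (ν / 2)`. -/
theorem truncated_gamma_mixture_tail
    (α ν ξ : ℝ) (hα : 0 < α) (hν : 0 < ν) (hξ : 0 < ξ) :
    Tendsto
      (fun h : ℝ => h ^ ν *
        ∫ u in (0 : ℝ)..ξ,
          Real.exp (-u * h ^ 2) * ((α ^ (ν / 2) / Real.Gamma (ν / 2)) *
            u ^ (ν / 2 - 1) * Real.exp (-α * u)))
      atTop (nhds (α ^ (ν / 2))) := by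
  set s := ν / 2 with hsdef
  have hs : 0 < s := by positivity
  have hΓ : 0 < Real.Gamma s := Real.Gamma_pos_of_pos hs
  set C := α ^ s / Real.Gamma s with hCdef
  have hCpos : 0 < C := by positivity
  -- the rescaled integrand family
  set g : ℝ → ℝ → ℝ := fun h t =>
    C * (Real.exp (-t) * t ^ (s - 1)) * Real.exp (-α * (t / h ^ 2)) with hgdef
  set F : ℝ → ℝ → ℝ := fun h => (Ioc (0:ℝ) (ξ * h ^ 2)).indicator (g h) with hFdef
  have hbound_int : IntegrableOn (fun t => C * (Real.exp (-t) * t ^ (s - 1))) (Ioi (0:ℝ)) :=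
    (Real.GammaIntegral_convergent hs).const_mul C
  have key : Tendsto (fun h => ∫ t in Ioi (0:ℝ), F h t) atTop (𝓝 (α ^ s)) := by
    have hint : (∫ t in Ioi (0:ℝ), C * (Real.exp (-t) * t ^ (s - 1))) = α ^ s := by
      rw [MeasureTheory.integral_const_mul, ← Real.Gamma_eq_integral hs, hCdef,
        div_mul_cancel₀ _ hΓ.ne']
    rw [← hint]
    apply tendsto_integral_filter_of_dominated_convergence
      (fun t => C * (Real.exp (-t) * t ^ (s - 1)))
    · filter_upwards with h
      exact ((Measurable.indicator (by fun_prop) measurableSet_Ioc)).aestronglyMeasurable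
    · filter_upwards with h
      filter_upwards [ae_restrict_mem measurableSet_Ioi] with t ht
      have ht0 : (0:ℝ) < t := ht
      have hexp : Real.exp (-α * (t / h ^ 2)) ≤ 1 := by
        rw [Real.exp_le_one_iff]
        have : 0 ≤ t / h ^ 2 := div_nonneg ht0.le (sq_nonneg h)
        nlinarith
      have hnn : 0 ≤ C * (Real.exp (-t) * t ^ (s - 1)) := by positivity
      have : ‖g h t‖ ≤ C * (Real.exp (-t) * t ^ (s - 1)) := by
        rw [hgdef, Real.norm_eq_abs, abs_of_nonneg (by positivity)]
        calc C * (Real.exp (-t) * t ^ (s - 1)) * Real.exp (-α * (t / h ^ 2))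
            ≤ C * (Real.exp (-t) * t ^ (s - 1)) * 1 := by
              apply mul_le_mul_of_nonneg_left hexp hnn
          _ = _ := mul_one _
      calc ‖F h t‖ ≤ ‖g h t‖ := by
            rw [hFdef]; exact norm_indicator_le_norm_self _ _
        _ ≤ _ := this
    · exact hbound_int
    · filter_upwards [ae_restrict_mem measurableSet_Ioi] with t ht
      have ht0 : (0:ℝ) < t := ht
      have h1 : Tendsto (fun h : ℝ => g h t) atTop (𝓝 (C * (Real.exp (-t) * t ^ (s - 1)))) := by
        have h2 : Tendsto (fun h : ℝ => t / h ^ 2) atTop (𝓝 0) :=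
          tendsto_const_nhds.div_atTop (tendsto_pow_atTop two_ne_zero)
        have h3 : Tendsto (fun h : ℝ => Real.exp (-α * (t / h ^ 2))) atTop (𝓝 1) := by
          have h4 : Tendsto (fun h : ℝ => -α * (t / h ^ 2)) atTop (𝓝 0) := by
            simpa using h2.const_mul (-α)
          have := (Real.continuous_exp.tendsto 0).comp h4
          simpa [neg_mul, Function.comp_def] using this
        have h5 := (tendsto_const_nhds (x := C * (Real.exp (-t) * t ^ (s - 1)))
          (f := (atTop : Filter ℝ))).mul h3
        rw [mul_one] at h5
        simp only [hgdef]
        convert h5 using 2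
      refine h1.congr' ?_
      filter_upwards [eventually_ge_atTop (Real.sqrt (t / ξ))] with h hh
      have hle : t ≤ ξ * h ^ 2 := by
        have h2 : t / ξ ≤ h ^ 2 := by
          nlinarith [Real.sq_sqrt (div_nonneg ht0.le hξ.le) (x := t / ξ),
            Real.sqrt_nonneg (t / ξ), sq_nonneg (h - Real.sqrt (t / ξ))]
        calc t = ξ * (t / ξ) := by field_simp
          _ ≤ ξ * h ^ 2 := by nlinarith
      rw [hFdef]
      simp only [indicator_of_mem (mem_Ioc.mpr ⟨ht0, hle⟩)]
  -- now identify the two expressions for large h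
  apply key.congr'
  filter_upwards [eventually_gt_atTop (0:ℝ)] with h hh
  have hh2 : (0:ℝ) < h ^ 2 := by positivity
  have hh2' : (h:ℝ) ^ 2 ≠ 0 := hh2.ne'
  have e1 : (∫ t in Ioi (0:ℝ), F h t) = ∫ t in Ioc (0:ℝ) (ξ * h ^ 2), g h t := by
    rw [hFdef, MeasureTheory.integral_indicator measurableSet_Ioc,
      Measure.restrict_restrict measurableSet_Ioc]
    congr 1
    rw [inter_eq_left.mpr (Ioc_subset_Ioi_self)]
  have e2 : (∫ t in Ioc (0:ℝ) (ξ * h ^ 2), g h t) = ∫ t in (0:ℝ)..(ξ * h ^ 2), g h t := by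
    rw [intervalIntegral.integral_of_le (by positivity)]
  have e3 : (∫ u in (0 : ℝ)..ξ,
      Real.exp (-u * h ^ 2) * (C * u ^ (s - 1) * Real.exp (-α * u)))
      = (h ^ 2)⁻¹ • ∫ t in (0:ℝ)..(ξ * h ^ 2),
          Real.exp (-(t / h ^ 2) * h ^ 2) *
            (C * (t / h ^ 2) ^ (s - 1) * Real.exp (-α * (t / h ^ 2))) := by
    have h4 := intervalIntegral.integral_comp_mul_right (a := 0) (b := ξ)
      (fun t => Real.exp (-(t / h ^ 2) * h ^ 2) *
        (C * (t / h ^ 2) ^ (s - 1) * Real.exp (-α * (t / h ^ 2)))) hh2'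
    rw [zero_mul] at h4
    refine Eq.trans ?_ h4
    apply intervalIntegral.integral_congr
    intro u hu
    beta_reduce
    rw [mul_div_cancel_right₀ u hh2']
  rw [e1, e2, e3, smul_eq_mul, ← mul_assoc, ← intervalIntegral.integral_const_mul]
  apply intervalIntegral.integral_congr
  intro t ht
  rw [uIcc_of_le (by positivity : (0:ℝ) ≤ ξ * h ^ 2)] at ht
  have ht0 : 0 ≤ t := ht.1
  have hpow : h ^ ν = (h ^ 2) ^ s := by
    rw [← Real.rpow_natCast h 2, ← Real.rpow_mul hh.le]
    norm_num [hsdef]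
    congr 1
    ring
  have hdiv : (t / h ^ 2) ^ (s - 1) = t ^ (s - 1) / (h ^ 2) ^ (s - 1) :=
    Real.div_rpow ht0 hh2.le _
  beta_reduce
  simp only [hgdef]
  rw [hpow, hdiv, ← neg_div (h ^ 2) t, div_mul_cancel₀ _ hh2']
  have hfac := Real.rpow_add_one (x := h ^ 2) hh2' (s - 1)
  rw [sub_add_cancel] at hfac
  rw [hfac]
  have hA : ((h:ℝ) ^ 2) ^ (s - 1) ≠ 0 := (Real.rpow_pos_of_pos hh2 _).ne'
  field_simp
end

section
/- Let d be a positive integer and let A, B, a, b be positive reals such that 1 < a/b < (A/B)^{2/d}. Then the function h ↦ A exp(−a h²) − B exp(−b h²) is positive definite on ℝ^d. -/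
open Real

section Aux

open MeasureTheory Complex
open scoped RealInnerProductSpace

/-- Fourier representation of a single Gaussian value. -/
lemma gauss_key (d : ℕ) (t : ℝ) (ht : 0 < t) (x : EuclideanSpace ℝ (Fin d)) :
    ∫ v : EuclideanSpace ℝ (Fin d),
        Complex.exp (-(↑(π ^ 2 / t)) * ‖v‖ ^ 2 + (-(2 * π * Complex.I)) * ⟪x, v⟫) =
      (((t / π) ^ ((d : ℝ) / 2) : ℝ) : ℂ) * Complex.exp (-(t : ℂ) * ‖x‖ ^ 2) := by
  have hu : (0 : ℝ) < π ^ 2 / t := by positivity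
  have hu' : (0 : ℝ) < ((π ^ 2 / t : ℝ) : ℂ).re := by
    rw [Complex.ofReal_re]; exact hu
  rw [GaussianFourier.integral_cexp_neg_mul_sq_norm_add hu' (-(2 * π * Complex.I)) x]
  have hπ : (π : ℂ) ≠ 0 := by exact_mod_cast pi_ne_zero
  have ht' : (t : ℂ) ≠ 0 := by exact_mod_cast ht.ne'
  have hrank : (Module.finrank ℝ (EuclideanSpace ℝ (Fin d)) : ℂ) = (d : ℂ) := by
    simp [finrank_euclideanSpace]
  congr 1
  · rw [show ((π : ℂ) / ((π ^ 2 / t : ℝ) : ℂ)) = ((t / π : ℝ) : ℂ) by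
      push_cast; field_simp]
    rw [hrank, show ((d : ℂ) / 2) = (((d : ℝ) / 2 : ℝ) : ℂ) by push_cast; ring,
      ← Complex.ofReal_cpow (by positivity : (0:ℝ) ≤ t / π)]
  · congr 1
    push_cast
    field_simp
    ring_nf
    simp [Complex.I_sq]

lemma gauss_sum_eq (d n : ℕ) (t : ℝ) (ht : 0 < t)
    (s : Fin n → EuclideanSpace ℝ (Fin d)) (c : Fin n → ℝ) :
    ∑ i : Fin n, ∑ j : Fin n, c i * c j * rexp (-t * ‖s i - s j‖ ^ 2) =
      ((t / π) ^ ((d : ℝ) / 2))⁻¹ *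
        ∫ v : EuclideanSpace ℝ (Fin d),
          rexp (-(π ^ 2 / t) * ‖v‖ ^ 2) *
            Complex.normSq (∑ i : Fin n, (c i : ℂ) *
              Complex.exp (-(2 * π * Complex.I) * ⟪s i, v⟫)) := by
  have hu : (0:ℝ) < π ^ 2 / t := by positivity
  have hu' : (0:ℝ) < ((π ^ 2 / t : ℝ) : ℂ).re := by rw [Complex.ofReal_re]; exact hu
  set K : ℝ := (t / π) ^ ((d : ℝ) / 2) with hK
  have hKpos : (0:ℝ) < K := rpow_pos_of_pos (by positivity) _
  set h : Fin n → Fin n → EuclideanSpace ℝ (Fin d) → ℂ :=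
    fun i j v => ((c i : ℂ) * c j) *
      Complex.exp (-(↑(π ^ 2 / t)) * ‖v‖ ^ 2 + (-(2 * π * Complex.I)) * ⟪s i - s j, v⟫) with hh
  have hexp : ∀ (q r1 r2 : ℝ), Complex.exp (↑q + -(2*π*Complex.I) * (↑r1 - ↑r2))
      = Complex.exp ↑q * (Complex.exp (-(2*π*Complex.I) * r1) *
          (starRingEnd ℂ) (Complex.exp (-(2*π*Complex.I) * r2))) := by
    intro q r1 r2
    rw [← Complex.exp_conj, ← Complex.exp_add, ← Complex.exp_add]
    congr 1
    simp only [map_mul, map_neg, Complex.conj_I, Complex.conj_ofReal, map_ofNat]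
    ring
  have point : ∀ v, (∑ i : Fin n, ∑ j : Fin n, h i j v) =
      ((rexp (-(π ^ 2 / t) * ‖v‖ ^ 2) *
        Complex.normSq (∑ i : Fin n, (c i : ℂ) *
          Complex.exp (-(2 * π * Complex.I) * ⟪s i, v⟫)) : ℝ) : ℂ) := by
    intro v
    push_cast
    rw [← Complex.mul_conj, map_sum, Finset.sum_mul_sum, Finset.mul_sum]
    refine Finset.sum_congr rfl fun i _ => ?_
    rw [Finset.mul_sum]
    refine Finset.sum_congr rfl fun j _ => ?_
    have e1 := hexp (-(π ^ 2 / t) * ‖v‖ ^ 2) ⟪s i, v⟫ ⟪s j, v⟫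
    push_cast at e1
    rw [hh]
    simp only []
    rw [inner_sub_left]
    push_cast
    rw [e1, map_mul, Complex.conj_ofReal]
    ring
  have hint : ∀ (i j : Fin n), Integrable (h i j) := fun i j =>
    (GaussianFourier.integrable_cexp_neg_mul_sq_norm_add hu' _ _).const_mul _
  have single : ∀ i j : Fin n, (c i : ℂ) * c j * Complex.exp (-(t:ℂ) * ‖s i - s j‖ ^ 2)
      = ((K : ℂ))⁻¹ * ∫ v, h i j v := by
    intro i j
    rw [hh]
    simp only []
    rw [integral_const_mul, gauss_key d t ht]
    have hKne : (K : ℂ) ≠ 0 := Complex.ofReal_ne_zero.mpr hKpos.ne'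
    field_simp [hKne]
    ring
  have main : ((∑ i : Fin n, ∑ j : Fin n, c i * c j * rexp (-t * ‖s i - s j‖ ^ 2) : ℝ) : ℂ)
      = ((K : ℂ))⁻¹ * ∫ v, (((rexp (-(π ^ 2 / t) * ‖v‖ ^ 2) *
          Complex.normSq (∑ i : Fin n, (c i : ℂ) *
            Complex.exp (-(2 * π * Complex.I) * ⟪s i, v⟫)) : ℝ)) : ℂ) := by
    push_cast [Complex.ofReal_exp]
    calc (∑ i : Fin n, ∑ j : Fin n, (c i : ℂ) * c j * Complex.exp (-(t:ℂ) * ‖s i - s j‖ ^ 2))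
        = ∑ i : Fin n, ∑ j : Fin n, ((K : ℂ))⁻¹ * ∫ v, h i j v := by
          refine Finset.sum_congr rfl fun i _ => Finset.sum_congr rfl fun j _ => ?_
          exact single i j
      _ = ((K : ℂ))⁻¹ * ∑ i : Fin n, ∫ v, (∑ j : Fin n, h i j v) := by
          rw [Finset.mul_sum]
          refine Finset.sum_congr rfl fun i _ => ?_
          rw [integral_finset_sum _ (fun j _ => hint i j), Finset.mul_sum]
      _ = ((K : ℂ))⁻¹ * ∫ v, ∑ i : Fin n, ∑ j : Fin n, h i j v := by
          rw [integral_finset_sum _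
            (fun i _ => integrable_finset_sum _ (fun j _ => hint i j))]
      _ = _ := by
          congr 1
          refine integral_congr_ae (Filter.Eventually.of_forall fun v => ?_)
          show (∑ i : Fin n, ∑ j : Fin n, h i j v) = _
          rw [point v]
          push_cast
          ring
  apply Complex.ofReal_injective
  rw [main, Complex.ofReal_mul, Complex.ofReal_inv]
  congr 1
  exact integral_ofReal


/-- Sufficiency part of Posa's criterion: a difference of Gaussian kernels
`A exp(-a h²) - B exp(-b h²)` with `1 < a/b < (A/B)^(2/d)` is positive
definite on `ℝ^d`. -/
theorem gaussian_difference_posdef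
    (d : ℕ) (hd : 0 < d) (A B a b : ℝ)
    (hA : 0 < A) (hB : 0 < B) (ha : 0 < a) (hb : 0 < b)
    (h1 : 1 < a / b) (h2 : a / b < (A / B) ^ (2 / (d : ℝ))) :
    ∀ (n : ℕ) (s : Fin n → EuclideanSpace ℝ (Fin d)) (c : Fin n → ℝ),
      0 ≤ ∑ i : Fin n, ∑ j : Fin n, c i * c j *
        (A * Real.exp (-a * ‖s i - s j‖ ^ 2) -
         B * Real.exp (-b * ‖s i - s j‖ ^ 2)) := by
  intro n s c
  classical
  have hd0 : ((d : ℝ)) ≠ 0 := Nat.cast_ne_zero.mpr hd.ne'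
  have hba : b < a := (one_lt_div hb).mp h1
  set Ka : ℝ := (a / π) ^ ((d : ℝ) / 2) with hKa
  set Kb : ℝ := (b / π) ^ ((d : ℝ) / 2) with hKb
  have hKapos : 0 < Ka := Real.rpow_pos_of_pos (by positivity) _
  have hKbpos : 0 < Kb := Real.rpow_pos_of_pos (by positivity) _
  set F : EuclideanSpace ℝ (Fin d) → ℂ :=
    fun v => ∑ i : Fin n, (c i : ℂ) *
      Complex.exp (-(2 * π * Complex.I) * (⟪s i, v⟫ : ℝ)) with hF
  set ga : EuclideanSpace ℝ (Fin d) → ℝ :=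
    fun v => rexp (-(π ^ 2 / a) * ‖v‖ ^ 2) * Complex.normSq (F v) with hga
  set gb : EuclideanSpace ℝ (Fin d) → ℝ :=
    fun v => rexp (-(π ^ 2 / b) * ‖v‖ ^ 2) * Complex.normSq (F v) with hgb
  -- split the sum
  have split : (∑ i : Fin n, ∑ j : Fin n, c i * c j *
        (A * Real.exp (-a * ‖s i - s j‖ ^ 2) - B * Real.exp (-b * ‖s i - s j‖ ^ 2)))
      = A * (∑ i : Fin n, ∑ j : Fin n, c i * c j * rexp (-a * ‖s i - s j‖ ^ 2))
        - B * (∑ i : Fin n, ∑ j : Fin n, c i * c j * rexp (-b * ‖s i - s j‖ ^ 2)) := by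
    rw [Finset.mul_sum, Finset.mul_sum, ← Finset.sum_sub_distrib]
    refine Finset.sum_congr rfl fun i _ => ?_
    rw [Finset.mul_sum, Finset.mul_sum, ← Finset.sum_sub_distrib]
    refine Finset.sum_congr rfl fun j _ => ?_
    ring
  rw [split, gauss_sum_eq d n a ha s c, gauss_sum_eq d n b hb s c]
  -- integrability
  have base : ∀ (u : ℝ), 0 < u →
      MeasureTheory.Integrable (fun v : EuclideanSpace ℝ (Fin d) => rexp (-u * ‖v‖ ^ 2)) := by
    intro u hu
    have hu' : (0:ℝ) < ((u : ℝ) : ℂ).re := by rw [Complex.ofReal_re]; exact hu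
    have H := (GaussianFourier.integrable_cexp_neg_mul_sq_norm_add hu' 0
      (0 : EuclideanSpace ℝ (Fin d))).norm
    refine H.congr (Filter.Eventually.of_forall fun v => ?_)
    simp only []
    rw [Complex.norm_exp,
      show (-(u:ℂ) * (‖v‖:ℂ) ^ 2 + 0 * ((inner ℝ (0 : EuclideanSpace ℝ (Fin d)) v : ℝ) : ℂ))
          = ((-u * ‖v‖ ^ 2 : ℝ) : ℂ) by push_cast; ring,
      Complex.ofReal_re]
  have hFcont : Continuous F := by
    rw [hF]
    refine continuous_finset_sum _ fun i _ => continuous_const.mul ?_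
    exact Complex.continuous_exp.comp (continuous_const.mul
      (Complex.continuous_ofReal.comp (Continuous.inner continuous_const continuous_id)))
  have hnsqmeas : MeasureTheory.AEStronglyMeasurable
      (fun v : EuclideanSpace ℝ (Fin d) => (Complex.normSq (F v) : ℝ)) :=
    (Complex.continuous_normSq.comp hFcont).aestronglyMeasurable
  have hFbd : ∀ v, ‖(Complex.normSq (F v) : ℝ)‖ ≤ (∑ i : Fin n, |c i|) ^ 2 := by
    intro v
    rw [Real.norm_eq_abs, _root_.abs_of_nonneg (Complex.normSq_nonneg _), Complex.normSq_eq_norm_sq]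
    have hFle : ‖F v‖ ≤ ∑ i : Fin n, |c i| := by
      calc ‖F v‖ = ‖F v‖ := rfl
        _ ≤ ∑ i : Fin n, ‖(c i : ℂ) *
            Complex.exp (-(2 * π * Complex.I) * (⟪s i, v⟫ : ℝ))‖ := norm_sum_le _ _
        _ = ∑ i : Fin n, |c i| := by
            refine Finset.sum_congr rfl fun i _ => ?_
            rw [norm_mul]
            simp [Complex.norm_exp]
    exact pow_le_pow_left₀ (norm_nonneg _) hFle 2
  have hIa : MeasureTheory.Integrable ga := by
    have := (base (π ^ 2 / a) (by positivity)).bdd_mul hnsqmeas (c := (∑ i : Fin n, |c i|) ^ 2) (Filter.Eventually.of_forall hFbd)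
    refine this.congr (Filter.Eventually.of_forall fun v => ?_)
    rw [hga]; ring
  have hIb : MeasureTheory.Integrable gb := by
    have := (base (π ^ 2 / b) (by positivity)).bdd_mul hnsqmeas (c := (∑ i : Fin n, |c i|) ^ 2) (Filter.Eventually.of_forall hFbd)
    refine this.congr (Filter.Eventually.of_forall fun v => ?_)
    rw [hgb]; ring
  -- coefficient inequality
  have hKab : Ka = (a / b) ^ ((d : ℝ) / 2) * Kb := by
    rw [hKa, hKb, ← Real.mul_rpow (by positivity) (by positivity)]
    congr 1
    field_simp
  have hr : (a / b) ^ ((d : ℝ) / 2) ≤ A / B := by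
    have h3 : (a / b) ^ ((d : ℝ) / 2) < ((A / B) ^ (2 / (d : ℝ))) ^ ((d : ℝ) / 2) :=
      Real.rpow_lt_rpow (by positivity) h2 (by positivity)
    rw [← Real.rpow_mul (by positivity : (0:ℝ) ≤ A / B),
      show (2 / (d : ℝ)) * ((d : ℝ) / 2) = 1 by field_simp,
      Real.rpow_one] at h3
    exact h3.le
  have hcoef : B * Kb⁻¹ ≤ A * Ka⁻¹ := by
    rw [← div_eq_mul_inv, ← div_eq_mul_inv, div_le_div_iff₀ hKbpos hKapos]
    calc B * Ka = (a / b) ^ ((d : ℝ) / 2) * (B * Kb) := by rw [hKab]; ring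
      _ ≤ (A / B) * (B * Kb) :=
          mul_le_mul_of_nonneg_right hr (by positivity)
      _ = A * Kb := by field_simp
  -- pointwise inequality
  have hW : ∀ v : EuclideanSpace ℝ (Fin d),
      0 ≤ A * Ka⁻¹ * ga v - B * Kb⁻¹ * gb v := by
    intro v
    have he : rexp (-(π ^ 2 / b) * ‖v‖ ^ 2) ≤ rexp (-(π ^ 2 / a) * ‖v‖ ^ 2) := by
      apply Real.exp_le_exp.mpr
      have hdiv : π ^ 2 / a ≤ π ^ 2 / b := by gcongr
      nlinarith [sq_nonneg ‖v‖]
    have hstep : B * Kb⁻¹ * rexp (-(π ^ 2 / b) * ‖v‖ ^ 2) ≤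
        A * Ka⁻¹ * rexp (-(π ^ 2 / a) * ‖v‖ ^ 2) := by
      calc B * Kb⁻¹ * rexp (-(π ^ 2 / b) * ‖v‖ ^ 2)
          ≤ A * Ka⁻¹ * rexp (-(π ^ 2 / b) * ‖v‖ ^ 2) :=
            mul_le_mul_of_nonneg_right hcoef (Real.exp_pos _).le
        _ ≤ A * Ka⁻¹ * rexp (-(π ^ 2 / a) * ‖v‖ ^ 2) :=
            mul_le_mul_of_nonneg_left he (by positivity)
    have hnsq : 0 ≤ (Complex.normSq (F v) : ℝ) := Complex.normSq_nonneg _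
    have := mul_le_mul_of_nonneg_right hstep hnsq
    rw [hga, hgb]
    simp only []
    nlinarith
  -- combine
  rw [← mul_assoc, ← mul_assoc, ← MeasureTheory.integral_const_mul,
    ← MeasureTheory.integral_const_mul, ← MeasureTheory.integral_sub
      (hIa.const_mul _) (hIb.const_mul _)]
  exact MeasureTheory.integral_nonneg fun v => hW v

end Aux
end

section
/- Let u > 0, η > 1 and τ > 0 with τ η ≥ 1. Then for every real h, τ exp(−u η h²) − exp(−u h²) ≥ (τ η)^{−1/(η−1)} · (1 − η)/η, and this lower bound is attained at h* = √(log(τ η)/(u (η − 1))). -/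
open Real

lemma hek_key (η τ : ℝ) (hη : 1 < η) (hτ : 0 < τ) (hτη : 1 ≤ τ * η) :
    τ * ((τ * η) ^ (-(1 / (η - 1)))) ^ η = (τ * η) ^ (-(1 / (η - 1))) / η := by
  have hA : (0:ℝ) < τ * η := lt_of_lt_of_le one_pos hτη
  have hε : η - 1 ≠ 0 := by nlinarith
  have hη0 : η ≠ 0 := by nlinarith
  have h1 : ((τ * η) ^ (-(1 / (η - 1)))) ^ η = (τ * η) ^ ((-(1 / (η - 1))) * η) :=
    (Real.rpow_mul hA.le _ _).symm
  have h2 : (-(1 / (η - 1))) * η = (-(1 / (η - 1))) + (-1) := by field_simp; ring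
  rw [h1, h2, Real.rpow_add hA, Real.rpow_neg_one]
  field_simp

lemma hek_ineq (η τ : ℝ) (hη : 1 < η) (hτ : 0 < τ) (hτη : 1 ≤ τ * η)
    (t : ℝ) (ht : 0 < t) :
    (τ * η) ^ (-(1 / (η - 1))) * ((1 - η) / η) ≤ τ * t ^ η - t := by
  have hA : (0:ℝ) < τ * η := lt_of_lt_of_le one_pos hτη
  set c : ℝ := (τ * η) ^ (-(1 / (η - 1))) with hc
  have hcpos : 0 < c := Real.rpow_pos_of_pos hA _
  have hη0 : (0:ℝ) < η := by linarith
  have hkey : τ * c ^ η = c / η := hek_key η τ hη hτ hτη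
  have hs : -1 ≤ t / c - 1 := by
    have : 0 < t / c := div_pos ht hcpos
    linarith
  have hb := one_add_mul_self_le_rpow_one_add hs hη.le
  rw [add_sub_cancel] at hb
  have hdiv : (t / c) ^ η = t ^ η / c ^ η := Real.div_rpow ht.le hcpos.le η
  rw [hdiv] at hb
  have hcη : 0 < c ^ η := Real.rpow_pos_of_pos hcpos η
  -- multiply by τ * c^η > 0
  have h3 : τ * c ^ η * (1 + η * (t / c - 1)) ≤ τ * c ^ η * (t ^ η / c ^ η) := by
    apply mul_le_mul_of_nonneg_left hb (by positivity)
  have h4 : τ * c ^ η * (t ^ η / c ^ η) = τ * t ^ η := by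
    field_simp
  rw [h4, hkey] at h3
  have h5 : c / η * (1 + η * (t / c - 1)) = c / η + t - c := by
    field_simp
    ring
  rw [h5] at h3
  have : c * ((1 - η) / η) = c / η - c := by field_simp
  linarith

/-- The hole-effect Gaussian-difference kernel `τ exp(-u η h²) - exp(-u h²)`
is bounded below by `(τη)^(-1/(η-1)) (1-η)/η`, with equality at
`h* = √(log(τη)/(u(η-1)))`. -/
theorem hole_effect_kernel_lower_bound
    (u η τ : ℝ) (hu : 0 < u) (hη : 1 < η) (hτ : 0 < τ) (hτη : 1 ≤ τ * η) :
    (∀ h : ℝ,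
      (τ * η) ^ (-(1 / (η - 1))) * ((1 - η) / η) ≤
        τ * Real.exp (-(u * η * h ^ 2)) - Real.exp (-(u * h ^ 2))) ∧
    (τ * Real.exp (-(u * η * (Real.sqrt (Real.log (τ * η) / (u * (η - 1)))) ^ 2)) -
        Real.exp (-(u * (Real.sqrt (Real.log (τ * η) / (u * (η - 1)))) ^ 2)) =
      (τ * η) ^ (-(1 / (η - 1))) * ((1 - η) / η)) := by
  have hA : (0:ℝ) < τ * η := lt_of_lt_of_le one_pos hτη
  have hε : (0:ℝ) < η - 1 := by linarith
  constructor
  · intro h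
    have hexp : Real.exp (-(u * η * h ^ 2)) = Real.exp (-(u * h ^ 2)) ^ η := by
      rw [← Real.exp_mul]; ring_nf
    rw [hexp]
    exact hek_ineq η τ hη hτ hτη _ (Real.exp_pos _)
  · have hL : 0 ≤ Real.log (τ * η) := Real.log_nonneg hτη
    have hsq : (Real.sqrt (Real.log (τ * η) / (u * (η - 1)))) ^ 2 =
        Real.log (τ * η) / (u * (η - 1)) := Real.sq_sqrt (by positivity)
    rw [hsq]
    have hu0 : u ≠ 0 := ne_of_gt hu
    have hε0 : η - 1 ≠ 0 := ne_of_gt hε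
    have e1 : -(u * (Real.log (τ * η) / (u * (η - 1)))) =
        Real.log (τ * η) * (-(1 / (η - 1))) := by field_simp
    have e2 : -(u * η * (Real.log (τ * η) / (u * (η - 1)))) =
        Real.log (τ * η) * ((-(1 / (η - 1))) * η) := by field_simp
    rw [e1, e2, ← Real.rpow_def_of_pos hA, ← Real.rpow_def_of_pos hA,
        Real.rpow_mul hA.le]
    have hkey : τ * ((τ * η) ^ (-(1 / (η - 1)))) ^ η =
        (τ * η) ^ (-(1 / (η - 1))) / η := hek_key η τ hη hτ hτη
    rw [hkey]
    have hη0 : η ≠ 0 := by positivity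
    field_simp
end

section
/- Let α₁, ν₁, ξ₁, α₂, ν₂, ξ₂, ω₁, ω₂ be positive reals, let η > 1 and τ > 0 with τ η > 1, and define φ̃_HM(h) = ω₁ ∫₀^{ξ₁} (τ exp(−u η h²) − exp(−u h²)) g_M(u; α₁, ν₁) du + ω₂ ∫_{ξ₂}^∞ exp(−u h²) g_M(u; α₂, ν₂) du for h ≥ 0, where g_M(u; α, ν) = (1/Γ(ν)) (1/(2α))^{2ν} u^{−ν−1} exp(−1/(4 u α²)). Then for every h ≥ 0, φ̃_HM(h) ≥ ω₁ · (τ η)^{−1/(η−1)} · ((1 − η)/η) · ∫₀^{ξ₁} g_M(u; α₁, ν₁) du. -/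
open MeasureTheory Real Set

private lemma kernel_lower {τ η : ℝ} (hτ : 0 < τ) (hη : 1 < η) (x : ℝ) :
    (τ * η) ^ (-(1 / (η - 1))) * ((1 - η) / η) ≤ τ * Real.exp (-(η * x)) - Real.exp (-x) := by
  have hη0 : (0:ℝ) < η := lt_trans one_pos hη
  have hη1 : 0 < η - 1 := by linarith
  have hτη0 : 0 < τ * η := mul_pos hτ hη0
  set t := Real.exp (-x) with ht
  have htpos : 0 < t := Real.exp_pos _
  have he : Real.exp (-(η * x)) = t ^ η := by
    rw [ht, ← Real.exp_mul]; ring_nf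
  have hpq : η.HolderConjugate (η / (η - 1)) := Real.HolderConjugate.conjExponent hη
  have ha : (0:ℝ) ≤ (τ * η) ^ (η⁻¹) * t := by positivity
  have hb : (0:ℝ) ≤ (τ * η) ^ (-η⁻¹) := by positivity
  have hy := Real.young_inequality_of_nonneg ha hb hpq
  have hab : (τ * η) ^ (η⁻¹) * t * (τ * η) ^ (-η⁻¹) = t := by
    rw [mul_comm ((τ * η) ^ (η⁻¹)) t, mul_assoc, ← Real.rpow_add hτη0]
    simp
  have hAη : ((τ * η) ^ (η⁻¹) * t) ^ η = (τ * η) * t ^ η := by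
    rw [Real.mul_rpow (by positivity) htpos.le, ← Real.rpow_mul hτη0.le,
      inv_mul_cancel₀ hη0.ne', Real.rpow_one]
  have hBq : ((τ * η) ^ (-η⁻¹)) ^ (η / (η - 1)) = (τ * η) ^ (-(1 / (η - 1))) := by
    rw [← Real.rpow_mul hτη0.le]
    congr 1
    field_simp
  rw [hab, hAη, hBq] at hy
  have h1 : (τ * η) * t ^ η / η = τ * t ^ η := by
    field_simp
  have h2 : (τ * η) ^ (-(1 / (η - 1))) / (η / (η - 1))
      = (τ * η) ^ (-(1 / (η - 1))) * ((η - 1) / η) := by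
    rw [div_eq_mul_inv, inv_div]
  rw [h1, h2] at hy
  have hc : (τ * η) ^ (-(1 / (η - 1))) * ((1 - η) / η)
      = -((τ * η) ^ (-(1 / (η - 1))) * ((η - 1) / η)) := by ring
  rw [he, hc]
  linarith

private lemma gM_bound {α ν : ℝ} (hα : 0 < α) (ξ : ℝ) :
    ∃ M : ℝ, 0 ≤ M ∧ ∀ u ∈ Set.Ioc (0:ℝ) ξ,
      u ^ (-ν - 1) * Real.exp (-1 / (4 * u * α ^ 2)) ≤ M := by
  set n : ℕ := ⌈ν⌉₊ + 1 with hn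
  have hne : ν + 1 ≤ (n : ℝ) := by
    have := Nat.le_ceil ν
    push_cast [hn]
    linarith
  refine ⟨(n.factorial : ℝ) * (4 * α ^ 2) ^ n * (max 1 ξ) ^ ((n : ℝ) - ν - 1),
    by positivity, ?_⟩
  rintro u ⟨hu0, huξ⟩
  have hy : 0 < 1 / (4 * u * α ^ 2) := by positivity
  have h1 : (1 / (4 * u * α ^ 2)) ^ n / n.factorial ≤ Real.exp (1 / (4 * u * α ^ 2)) :=
    Real.pow_div_factorial_le_exp _ hy.le n
  have h2 : Real.exp (-1 / (4 * u * α ^ 2)) ≤ (n.factorial : ℝ) * (4 * u * α ^ 2) ^ n := by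
    rw [neg_div, Real.exp_neg]
    have h3 : 0 < (1 / (4 * u * α ^ 2)) ^ n / n.factorial := by positivity
    have h4 := inv_anti₀ h3 h1
    calc (Real.exp (1 / (4 * u * α ^ 2)))⁻¹
        ≤ ((1 / (4 * u * α ^ 2)) ^ n / n.factorial)⁻¹ := h4
      _ = (n.factorial : ℝ) * (4 * u * α ^ 2) ^ n := by
          rw [div_pow, one_pow]
          field_simp
  have hrn : (0:ℝ) ≤ u ^ (-ν - 1) := Real.rpow_nonneg hu0.le _
  calc u ^ (-ν - 1) * Real.exp (-1 / (4 * u * α ^ 2))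
      ≤ u ^ (-ν - 1) * ((n.factorial : ℝ) * (4 * u * α ^ 2) ^ n) :=
        mul_le_mul_of_nonneg_left h2 hrn
    _ = (n.factorial : ℝ) * (4 * α ^ 2) ^ n * (u ^ (-ν - 1) * u ^ (n:ℝ)) := by
        rw [Real.rpow_natCast]
        ring
    _ = (n.factorial : ℝ) * (4 * α ^ 2) ^ n * u ^ ((n:ℝ) - ν - 1) := by
        rw [← Real.rpow_add hu0]
        ring_nf
    _ ≤ (n.factorial : ℝ) * (4 * α ^ 2) ^ n * (max 1 ξ) ^ ((n : ℝ) - ν - 1) := by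
        apply mul_le_mul_of_nonneg_left _ (by positivity)
        exact Real.rpow_le_rpow hu0.le (le_trans huξ (le_max_right 1 ξ)) (by linarith)

private lemma II_of_bound (φ : ℝ → ℝ) (ξ M : ℝ) (hξ : 0 ≤ ξ) (hm : Measurable φ)
    (hb : ∀ u ∈ Set.Ioc (0:ℝ) ξ, |φ u| ≤ M) :
    IntervalIntegrable φ volume 0 ξ := by
  rw [intervalIntegrable_iff, uIoc_of_le hξ]
  apply MeasureTheory.Integrable.mono' (g := fun _ => M)
    (integrableOn_const measure_Ioc_lt_top.ne)
    hm.aestronglyMeasurable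
  refine (ae_restrict_iff' measurableSet_Ioc).2 (ae_of_all _ ?_)
  intro u hu
  simpa [Real.norm_eq_abs] using hb u hu

/-- Lower bound for the hybrid Hole-Effect–Matérn covariance function. -/
theorem hybrid_hole_effect_matern_lower_bound
    (α₁ ν₁ ξ₁ α₂ ν₂ ξ₂ ω₁ ω₂ τ η : ℝ)
    (hα₁ : 0 < α₁) (hν₁ : 0 < ν₁) (hξ₁ : 0 < ξ₁)
    (hα₂ : 0 < α₂) (hν₂ : 0 < ν₂) (hξ₂ : 0 < ξ₂)
    (hω₁ : 0 < ω₁) (hω₂ : 0 < ω₂) (hτ : 0 < τ)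
    (hη : 1 < η) (hτη : 1 < τ * η) :
    ∀ h : ℝ, 0 ≤ h →
      ω₁ * ((τ * η) ^ (-(1 / (η - 1))) * ((1 - η) / η)) *
          (∫ u in (0 : ℝ)..ξ₁,
            (1 / Real.Gamma ν₁) * (1 / (2 * α₁)) ^ (2 * ν₁) *
              u ^ (-ν₁ - 1) * Real.exp (-1 / (4 * u * α₁ ^ 2))) ≤
        ω₁ * (∫ u in (0 : ℝ)..ξ₁,
            (τ * Real.exp (-u * η * h ^ 2) - Real.exp (-u * h ^ 2)) *
            ((1 / Real.Gamma ν₁) * (1 / (2 * α₁)) ^ (2 * ν₁) *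
              u ^ (-ν₁ - 1) * Real.exp (-1 / (4 * u * α₁ ^ 2)))) +
          ω₂ * ∫ u in Ioi ξ₂,
            Real.exp (-u * h ^ 2) *
            ((1 / Real.Gamma ν₂) * (1 / (2 * α₂)) ^ (2 * ν₂) *
              u ^ (-ν₂ - 1) * Real.exp (-1 / (4 * u * α₂ ^ 2))) := by
  intro h hh
  have hΓ₁ : 0 < Real.Gamma ν₁ := Real.Gamma_pos_of_pos hν₁
  have hΓ₂ : 0 < Real.Gamma ν₂ := Real.Gamma_pos_of_pos hν₂
  have hC : (0:ℝ) ≤ (1 / Real.Gamma ν₁) * (1 / (2 * α₁)) ^ (2 * ν₁) := by positivity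
  set c : ℝ := (τ * η) ^ (-(1 / (η - 1))) * ((1 - η) / η) with hcdef
  set g : ℝ → ℝ := fun u => (1 / Real.Gamma ν₁) * (1 / (2 * α₁)) ^ (2 * ν₁) *
      u ^ (-ν₁ - 1) * Real.exp (-1 / (4 * u * α₁ ^ 2)) with hgdef
  set f : ℝ → ℝ := fun u => τ * Real.exp (-u * η * h ^ 2) - Real.exp (-u * h ^ 2) with hfdef
  -- nonnegativity of g on [0, ∞)
  have hgnn : ∀ u : ℝ, 0 ≤ u → 0 ≤ g u := by
    intro u hu
    exact mul_nonneg (mul_nonneg hC (Real.rpow_nonneg hu _)) (Real.exp_nonneg _)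
  -- pointwise lower bound on f
  have hflow : ∀ u : ℝ, c ≤ f u := by
    intro u
    have := kernel_lower hτ hη (u * h ^ 2)
    rw [show -(η * (u * h ^ 2)) = -u * η * h ^ 2 by ring,
      show -(u * h ^ 2) = -u * h ^ 2 by ring] at this
    exact this
  -- bound on g
  obtain ⟨M, hM0, hM⟩ := gM_bound hα₁ (ν := ν₁) ξ₁
  have hgb : ∀ u ∈ Set.Ioc (0:ℝ) ξ₁,
      |g u| ≤ (1 / Real.Gamma ν₁) * (1 / (2 * α₁)) ^ (2 * ν₁) * M := by
    intro u hu
    rw [abs_of_nonneg (hgnn u hu.1.le), hgdef]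
    calc (1 / Real.Gamma ν₁) * (1 / (2 * α₁)) ^ (2 * ν₁) *
          u ^ (-ν₁ - 1) * Real.exp (-1 / (4 * u * α₁ ^ 2))
        = (1 / Real.Gamma ν₁) * (1 / (2 * α₁)) ^ (2 * ν₁) *
          (u ^ (-ν₁ - 1) * Real.exp (-1 / (4 * u * α₁ ^ 2))) := by ring
      _ ≤ (1 / Real.Gamma ν₁) * (1 / (2 * α₁)) ^ (2 * ν₁) * M :=
          mul_le_mul_of_nonneg_left (hM u hu) hC
  -- bound on f
  have hfb : ∀ u ∈ Set.Ioc (0:ℝ) ξ₁, |f u| ≤ τ + 1 := by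
    rintro u ⟨hu0, _⟩
    have hη0 : (0:ℝ) < η := lt_trans one_pos hη
    have he1 : Real.exp (-u * η * h ^ 2) ≤ 1 := by
      rw [Real.exp_le_one_iff]
      have : 0 ≤ u * η * h ^ 2 := by positivity
      linarith
    have he2 : Real.exp (-u * h ^ 2) ≤ 1 := by
      rw [Real.exp_le_one_iff]
      have : 0 ≤ u * h ^ 2 := by positivity
      linarith
    have hp1 : 0 < Real.exp (-u * η * h ^ 2) := Real.exp_pos _
    have hp2 : 0 < Real.exp (-u * h ^ 2) := Real.exp_pos _
    have ht1 : τ * Real.exp (-u * η * h ^ 2) ≤ τ :=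
      mul_le_of_le_one_right hτ.le he1
    rw [abs_le]
    constructor <;> [skip; skip] <;> simp only [hfdef] <;> nlinarith
  -- measurability
  have hmg : Measurable g := by rw [hgdef]; fun_prop
  have hmf : Measurable f := by rw [hfdef]; fun_prop
  -- integrability
  have intg : IntervalIntegrable g volume 0 ξ₁ :=
    II_of_bound g ξ₁ _ hξ₁.le hmg hgb
  have intfg : IntervalIntegrable (fun u => f u * g u) volume 0 ξ₁ := by
    apply II_of_bound _ ξ₁ ((τ + 1) * ((1 / Real.Gamma ν₁) * (1 / (2 * α₁)) ^ (2 * ν₁) * M))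
      hξ₁.le (hmf.mul hmg)
    intro u hu
    rw [Pi.mul_apply, abs_mul]
    exact mul_le_mul (hfb u hu) (hgb u hu) (abs_nonneg _) (by positivity)
  -- key inequality on the first integral
  have key : c * (∫ u in (0:ℝ)..ξ₁, g u) ≤ ∫ u in (0:ℝ)..ξ₁, f u * g u := by
    rw [← intervalIntegral.integral_const_mul]
    exact intervalIntegral.integral_mono_on hξ₁.le (intg.const_mul c) intfg
      (fun u hu => mul_le_mul_of_nonneg_right (hflow u) (hgnn u hu.1))
  -- second integral nonneg
  have hJ : 0 ≤ ∫ u in Ioi ξ₂,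
      Real.exp (-u * h ^ 2) *
        ((1 / Real.Gamma ν₂) * (1 / (2 * α₂)) ^ (2 * ν₂) *
          u ^ (-ν₂ - 1) * Real.exp (-1 / (4 * u * α₂ ^ 2))) := by
    apply setIntegral_nonneg measurableSet_Ioi
    intro u hu
    have hu0 : (0:ℝ) ≤ u := (hξ₂.trans hu).le
    exact mul_nonneg (Real.exp_nonneg _)
      (mul_nonneg (mul_nonneg (by positivity) (Real.rpow_nonneg hu0 _))
        (Real.exp_nonneg _))
  rw [mul_assoc]
  exact le_trans (mul_le_mul_of_nonneg_left key hω₁.le)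
    (le_add_of_nonneg_right (mul_nonneg hω₂.le hJ))
end

section
/- Let α₁, ν₁, ξ₁, α₂, ν₂, ξ₂, ω₁, ω₂ be positive reals and let κ ≥ 0 be a real number. Then the quantity ω₁ ∫₀^{ξ₁} u^{κ} · (1/Γ(ν₁)) (1/(2α₁))^{2ν₁} u^{−ν₁−1} exp(−1/(4 u α₁²)) du + ω₂ ∫_{ξ₂}^∞ u^{κ} · (1/Γ(ν₂)) (1/(2α₂))^{2ν₂} u^{−ν₂−1} exp(−1/(4 u α₂²)) du is finite if and only if κ < ν₂. -/
open MeasureTheory Real Set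

private lemma ennreal_mul_lt_top_iff_right {a b : ENNReal} (ha0 : a ≠ 0) (hat : a ≠ ⊤) :
    a * b < ⊤ ↔ b < ⊤ := by
  constructor
  · intro h
    by_contra hb
    rw [not_lt, top_le_iff] at hb
    subst hb
    rw [ENNReal.mul_top ha0] at h
    exact (lt_irrefl _ h)
  · exact fun hb => ENNReal.mul_lt_top hat.lt_top hb

/-- exp(-c/u) ≤ n! * (u/c)^n for 0 < c, 0 < u. -/
private lemma exp_neg_div_le {c u : ℝ} (hc : 0 < c) (hu : 0 < u) (n : ℕ) :
    Real.exp (-(c / u)) ≤ (Nat.factorial n : ℝ) * (u / c) ^ n := by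
  have h1 : (c / u) ^ n / (Nat.factorial n : ℝ) ≤ Real.exp (c / u) :=
    Real.pow_div_factorial_le_exp (c / u) (by positivity) n
  have hn : (0:ℝ) < Nat.factorial n := by positivity
  have hpow : (0:ℝ) < (c / u) ^ n / (Nat.factorial n : ℝ) := by positivity
  calc Real.exp (-(c / u)) = (Real.exp (c / u))⁻¹ := Real.exp_neg _
    _ ≤ ((c / u) ^ n / (Nat.factorial n : ℝ))⁻¹ := by
        apply inv_anti₀ hpow h1
    _ = (Nat.factorial n : ℝ) * (u / c) ^ n := by
        rw [div_pow, div_pow]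
        field_simp

/-- u^e ≤ max 1 (ξ^e) for 0 < u ≤ ξ, 0 ≤ e. -/
private lemma rpow_le_max {u ξ e : ℝ} (hu : 0 < u) (huξ : u ≤ ξ) (he : 0 ≤ e) :
    u ^ e ≤ max 1 (ξ ^ e) := by
  rcases le_or_gt u 1 with h | h
  · exact le_max_of_le_left (Real.rpow_le_one hu.le h he)
  · exact le_max_of_le_right (Real.rpow_le_rpow hu.le huξ he)

/-- The κ-th moment of the piecewise mixing function of the hybrid
Hole-Effect–Matérn model is finite if and only if `κ < ν₂`. -/
theorem hybrid_hole_effect_matern_moment_finite_iff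
    (α₁ ν₁ ξ₁ α₂ ν₂ ξ₂ ω₁ ω₂ κ : ℝ)
    (hα₁ : 0 < α₁) (hν₁ : 0 < ν₁) (hξ₁ : 0 < ξ₁)
    (hα₂ : 0 < α₂) (hν₂ : 0 < ν₂) (hξ₂ : 0 < ξ₂)
    (hω₁ : 0 < ω₁) (hω₂ : 0 < ω₂) (hκ : 0 ≤ κ) :
    (ENNReal.ofReal ω₁ *
        (∫⁻ u in Ioo (0 : ℝ) ξ₁,
          ENNReal.ofReal (u ^ κ * ((1 / Real.Gamma ν₁) * (1 / (2 * α₁)) ^ (2 * ν₁) *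
            u ^ (-ν₁ - 1) * Real.exp (-1 / (4 * u * α₁ ^ 2))))) +
      ENNReal.ofReal ω₂ *
        (∫⁻ u in Ioi ξ₂,
          ENNReal.ofReal (u ^ κ * ((1 / Real.Gamma ν₂) * (1 / (2 * α₂)) ^ (2 * ν₂) *
            u ^ (-ν₂ - 1) * Real.exp (-1 / (4 * u * α₂ ^ 2))))) < ⊤)
      ↔ κ < ν₂ := by
  set C₁ : ℝ := (1 / Real.Gamma ν₁) * (1 / (2 * α₁)) ^ (2 * ν₁) with hC₁def
  set C₂ : ℝ := (1 / Real.Gamma ν₂) * (1 / (2 * α₂)) ^ (2 * ν₂) with hC₂def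
  have hΓ₁ : 0 < Real.Gamma ν₁ := Real.Gamma_pos_of_pos hν₁
  have hΓ₂ : 0 < Real.Gamma ν₂ := Real.Gamma_pos_of_pos hν₂
  have hC₁ : 0 < C₁ := by
    apply mul_pos (by positivity)
    exact Real.rpow_pos_of_pos (by positivity) _
  have hC₂ : 0 < C₂ := by
    apply mul_pos (by positivity)
    exact Real.rpow_pos_of_pos (by positivity) _
  -- First integral is always finite
  have hI₁ : (∫⁻ u in Ioo (0 : ℝ) ξ₁,
      ENNReal.ofReal (u ^ κ * (C₁ * u ^ (-ν₁ - 1) * Real.exp (-1 / (4 * u * α₁ ^ 2))))) < ⊤ := by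
    set n : ℕ := ⌈ν₁ + 1⌉₊ with hn
    set c : ℝ := 1 / (4 * α₁ ^ 2) with hc
    have hcpos : 0 < c := by positivity
    set M : ℝ := C₁ * ((Nat.factorial n : ℝ) / c ^ n) * max 1 (ξ₁ ^ (κ - ν₁ - 1 + n)) with hM
    have hbound : ∀ u ∈ Ioo (0:ℝ) ξ₁,
        u ^ κ * (C₁ * u ^ (-ν₁ - 1) * Real.exp (-1 / (4 * u * α₁ ^ 2))) ≤ M := by
      intro u hu
      obtain ⟨hu0, huξ⟩ := hu
      have hexp : Real.exp (-1 / (4 * u * α₁ ^ 2)) ≤ (Nat.factorial n : ℝ) * (u / c) ^ n := by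
        have : -1 / (4 * u * α₁ ^ 2) = -(c / u) := by
          rw [hc]; field_simp
        rw [this]
        exact exp_neg_div_le hcpos hu0 n
      have hstep : u ^ κ * (C₁ * u ^ (-ν₁ - 1) * Real.exp (-1 / (4 * u * α₁ ^ 2)))
          ≤ C₁ * ((Nat.factorial n : ℝ) / c ^ n) * u ^ (κ - ν₁ - 1 + n) := by
        have h1 : u ^ κ * (C₁ * u ^ (-ν₁ - 1) * Real.exp (-1 / (4 * u * α₁ ^ 2)))
            ≤ u ^ κ * (C₁ * u ^ (-ν₁ - 1) * ((Nat.factorial n : ℝ) * (u / c) ^ n)) := by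
          apply mul_le_mul_of_nonneg_left _ (Real.rpow_nonneg hu0.le _)
          apply mul_le_mul_of_nonneg_left hexp
          positivity
        have e1 : u ^ κ * u ^ (-ν₁ - 1) * (u:ℝ) ^ (n:ℕ) = u ^ (κ - ν₁ - 1 + (n:ℝ)) := by
          rw [← Real.rpow_natCast u n, ← Real.rpow_add hu0, ← Real.rpow_add hu0]
          congr 1
          ring
        refine h1.trans (le_of_eq ?_)
        rw [div_pow, ← e1]
        ring
      refine hstep.trans ?_
      rw [hM]
      apply mul_le_mul_of_nonneg_left _ (by positivity)
      apply rpow_le_max hu0 huξ.le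
      have : (ν₁ + 1 : ℝ) ≤ n := Nat.le_ceil _
      linarith
    calc (∫⁻ u in Ioo (0 : ℝ) ξ₁,
          ENNReal.ofReal (u ^ κ * (C₁ * u ^ (-ν₁ - 1) * Real.exp (-1 / (4 * u * α₁ ^ 2)))))
        ≤ ∫⁻ _ in Ioo (0 : ℝ) ξ₁, ENNReal.ofReal M := by
          apply setLIntegral_mono measurable_const
          intro u hu
          exact ENNReal.ofReal_le_ofReal (hbound u hu)
      _ = ENNReal.ofReal M * volume (Ioo (0:ℝ) ξ₁) := by
          rw [setLIntegral_const]
      _ < ⊤ := by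
          apply ENNReal.mul_lt_top ENNReal.ofReal_lt_top
          rw [Real.volume_Ioo]
          exact ENNReal.ofReal_lt_top
  -- Second integral finite iff κ < ν₂
  have hI₂ : (∫⁻ u in Ioi ξ₂,
      ENNReal.ofReal (u ^ κ * (C₂ * u ^ (-ν₂ - 1) * Real.exp (-1 / (4 * u * α₂ ^ 2))))) < ⊤
      ↔ κ < ν₂ := by
    set s : ℝ := κ - ν₂ - 1 with hs
    set c : ℝ := 1 / (4 * α₂ ^ 2) with hc
    have hcpos : 0 < c := by positivity
    set e₀ : ℝ := Real.exp (-(c / ξ₂)) with he₀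
    have he₀pos : 0 < e₀ := Real.exp_pos _
    have hJ : (∫⁻ u in Ioi ξ₂, ENNReal.ofReal (u ^ s)) < ⊤ ↔ s < -1 := by
      have hmeas : AEStronglyMeasurable (fun u : ℝ => u ^ s) (volume.restrict (Ioi ξ₂)) :=
        (continuousOn_id.rpow_const fun x hx => Or.inl (hξ₂.trans hx).ne').aestronglyMeasurable
          measurableSet_Ioi
      have hnn : 0 ≤ᵐ[volume.restrict (Ioi ξ₂)] fun u : ℝ => u ^ s :=
        (ae_restrict_mem measurableSet_Ioi).mono fun u hu =>
          Real.rpow_nonneg (hξ₂.trans hu).le _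
      rw [lt_top_iff_ne_top, lintegral_ofReal_ne_top_iff_integrable hmeas hnn]
      exact integrableOn_Ioi_rpow_iff hξ₂
    -- pointwise rewrite and bounds
    have hrw : ∀ u ∈ Ioi ξ₂,
        u ^ κ * (C₂ * u ^ (-ν₂ - 1) * Real.exp (-1 / (4 * u * α₂ ^ 2)))
          = C₂ * Real.exp (-(c / u)) * u ^ s := by
      intro u hu
      have hu0 : 0 < u := hξ₂.trans hu
      have hexp : -1 / (4 * u * α₂ ^ 2) = -(c / u) := by
        rw [hc]; field_simp
      have hpow : u ^ s = u ^ κ * u ^ (-ν₂ - 1) := by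
        rw [← Real.rpow_add hu0]
        congr 1
        ring
      rw [hexp, hpow]
      ring
    have hupper : (∫⁻ u in Ioi ξ₂,
        ENNReal.ofReal (u ^ κ * (C₂ * u ^ (-ν₂ - 1) * Real.exp (-1 / (4 * u * α₂ ^ 2)))))
        ≤ ENNReal.ofReal C₂ * ∫⁻ u in Ioi ξ₂, ENNReal.ofReal (u ^ s) := by
      rw [← lintegral_const_mul' _ _ ENNReal.ofReal_ne_top]
      apply setLIntegral_mono (by fun_prop)
      intro u hu
      rw [hrw u hu, ← ENNReal.ofReal_mul hC₂.le]
      apply ENNReal.ofReal_le_ofReal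
      have hu0 : 0 < u := hξ₂.trans hu
      have hexp1 : Real.exp (-(c / u)) ≤ 1 := Real.exp_le_one_iff.mpr (neg_nonpos.mpr (by positivity))
      have hse : 0 ≤ u ^ s := Real.rpow_nonneg hu0.le _
      calc C₂ * Real.exp (-(c / u)) * u ^ s ≤ C₂ * 1 * u ^ s :=
            mul_le_mul_of_nonneg_right (mul_le_mul_of_nonneg_left hexp1 hC₂.le) hse
        _ = C₂ * u ^ s := by ring
    have hlower : ENNReal.ofReal (C₂ * e₀) * (∫⁻ u in Ioi ξ₂, ENNReal.ofReal (u ^ s))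
        ≤ (∫⁻ u in Ioi ξ₂,
          ENNReal.ofReal (u ^ κ * (C₂ * u ^ (-ν₂ - 1) * Real.exp (-1 / (4 * u * α₂ ^ 2))))) := by
      rw [← lintegral_const_mul' _ _ ENNReal.ofReal_ne_top]
      apply setLIntegral_mono (by fun_prop)
      intro u hu
      rw [hrw u hu, ← ENNReal.ofReal_mul (by positivity)]
      apply ENNReal.ofReal_le_ofReal
      have hu0 : 0 < u := hξ₂.trans hu
      have hexp : e₀ ≤ Real.exp (-(c / u)) := by
        apply Real.exp_le_exp.mpr
        have : c / u ≤ c / ξ₂ := div_le_div_of_nonneg_left hcpos.le hξ₂ (le_of_lt hu)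
        linarith
      have hse : 0 ≤ u ^ s := Real.rpow_nonneg hu0.le _
      exact mul_le_mul_of_nonneg_right (mul_le_mul_of_nonneg_left hexp hC₂.le) hse
    constructor
    · intro h
      have hJfin : (∫⁻ u in Ioi ξ₂, ENNReal.ofReal (u ^ s)) < ⊤ := by
        have := lt_of_le_of_lt hlower h
        rw [ennreal_mul_lt_top_iff_right
          (by simp [ENNReal.ofReal_eq_zero, not_le.mpr (mul_pos hC₂ he₀pos)])
          ENNReal.ofReal_ne_top] at this
        exact this
      have := hJ.mp hJfin
      rw [hs] at this
      linarith
    · intro h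
      have hslt : s < -1 := by rw [hs]; linarith
      have hJfin := hJ.mpr hslt
      exact lt_of_le_of_lt hupper
        (ENNReal.mul_lt_top ENNReal.ofReal_lt_top hJfin)
  have hω₁t : ENNReal.ofReal ω₁ * (∫⁻ u in Ioo (0 : ℝ) ξ₁,
      ENNReal.ofReal (u ^ κ * (C₁ * u ^ (-ν₁ - 1) * Real.exp (-1 / (4 * u * α₁ ^ 2))))) < ⊤ :=
    ENNReal.mul_lt_top ENNReal.ofReal_lt_top hI₁
  rw [ENNReal.add_lt_top]
  constructor
  · intro ⟨_, h2⟩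
    rw [ennreal_mul_lt_top_iff_right
      (by simp [ENNReal.ofReal_eq_zero, not_le.mpr hω₂]) ENNReal.ofReal_ne_top] at h2
    exact hI₂.mp h2
  · intro h
    exact ⟨hω₁t, ENNReal.mul_lt_top ENNReal.ofReal_lt_top (hI₂.mpr h)⟩
end
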